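/- arXiv:2512.01520 — 9 statements merged into one kernel-verified Lean document; each statement's English description precedes it below -/
import Mathlib

section
/- Let R be a principal ideal domain with a ring automorphism σ such that for every irreducible z ∈ R and every integer m ≥ 1, σ^m(z) is not an associate of z (all σ-orbits of irreducibles are infinite). Let a ∈ R be a nonzero nonunit, let a₀ be an irreducible factor of a such that σ^{−k}(a₀) does not divide a for any k > 0, and write a = a₀·a₁. Fix n ≥ 1 and define maps X, Y : R^n → R^n by X(v₁,…,vₙ) = (a₀·σ^{−1}(vₙ), σ^{−1}(v₁), …, σ^{−1}(v_{n−1})) and Y(v₁,…,vₙ) = (σ(a·v₂), σ(a·v₃), …, σ(a·vₙ), σ(a₁·v₁)). Then the only R-submodules W of R^n satisfying X(W) ⊆ W and Y(W) ⊆ W are {0} and R^n. -/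
set_option linter.unusedSectionVars false
open UniqueFactorizationMonoid

attribute [local instance] UniqueFactorizationMonoid.normalizationMonoid

section aux
variable {R : Type*} [CommRing R] [IsDomain R] [IsPrincipalIdealRing R]

lemma eqv_prime (e : R ≃+* R) {p : R} (h : Prime p) : Prime (e p) :=
  (MulEquiv.prime_iff e.toMulEquiv).mpr h

lemma eqv_assoc (e : R ≃+* R) {x y : R} (h : Associated x y) : Associated (e x) (e y) :=
  associated_of_dvd_dvd (map_dvd e.toRingHom h.dvd) (map_dvd e.toRingHom h.symm.dvd)

lemma eqv_dvd_iff (e : R ≃+* R) {x y : R} : e x ∣ e y ↔ x ∣ y := by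
  constructor
  · intro ⟨c, hc⟩
    exact ⟨e.symm c, by apply e.injective; rw [map_mul, hc]; simp⟩
  · exact fun h => map_dvd e h

noncomputable def Om (x : R) : ℕ := (normalizedFactors x).card

lemma Om_mul {x y : R} (hx : x ≠ 0) (hy : y ≠ 0) : Om (x * y) = Om x + Om y := by
  unfold Om; rw [normalizedFactors_mul hx hy, Multiset.card_add]

lemma Om_prime {p : R} (hp : Prime p) : Om p = 1 := by
  unfold Om; rw [normalizedFactors_irreducible hp.irreducible]; rfl

lemma Om_dvd_le {x r : R} (hr : r ≠ 0) (h : x ∣ r) : Om x ≤ Om r := by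
  obtain ⟨c, rfl⟩ := h
  have hx : x ≠ 0 := left_ne_zero_of_mul hr
  have hc : c ≠ 0 := right_ne_zero_of_mul hr
  rw [Om_mul hx hc]; omega

end aux

section aux2
variable {R : Type*} [CommRing R] [IsDomain R] [IsPrincipalIdealRing R]

lemma key_descent (τ : R ≃+* R) (q₁ : R) (h₁ : Prime q₁)
    (Q : R → Prop) (hQp : ∀ q, Q q → Prime q)
    (hQτ : ∀ q, Q q → Q (τ q)) (hQτ' : ∀ q, Q q → Q (τ.symm q))
    (hQa : ∀ q, Q q → ¬ Associated q₁ q) :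
    ∀ (N : ℕ) (x y q : R), Q q → x ≠ 0 → y ≠ 0 → Om x + Om y < N →
      q₁ * τ x * y ≠ q * τ y * x := by
  intro N
  induction N with
  | zero => intro x y q _ _ _ h; omega
  | succ N ih =>
    intro x y q hQ hx hy hN heq
    have hq := hQp q hQ
    have hq0 : q ≠ 0 := hq.ne_zero
    have hτx0 : τ x ≠ 0 := fun h => hx (by simpa using τ.injective (h.trans (map_zero τ).symm))
    have hdvd : q ∣ q₁ * τ x * y := ⟨τ y * x, by rw [heq, mul_assoc]⟩
    rcases hq.dvd_mul.mp hdvd with hd | hd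
    · rcases hq.dvd_mul.mp hd with hd | hd
      · exact hQa q hQ ((hq.irreducible.associated_of_dvd h₁.irreducible hd).symm)
      · -- q ∣ τ x
        obtain ⟨z, hz⟩ := hd
        have hz0 : z ≠ 0 := by rintro rfl; rw [mul_zero] at hz; exact hτx0 hz
        set x' := τ.symm z with hx'def
        have hx'0 : x' ≠ 0 := fun h => hz0 (by simpa [hx'def] using congrArg τ h)
        have hτx' : τ x' = z := τ.apply_symm_apply z
        have hxd : x = τ.symm q * x' := by
          apply τ.injective; rw [map_mul, hτx', τ.apply_symm_apply, ← hz]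
        have h2 : q₁ * τ x' * y = τ.symm q * τ y * x' := by
          apply mul_left_cancel₀ hq0
          rw [hz, hxd] at heq
          rw [hτx']
          linear_combination heq
        have hOm : Om x = Om x' + 1 := by
          rw [hxd, Om_mul (eqv_prime τ.symm hq).ne_zero hx'0,
            Om_prime (eqv_prime τ.symm hq)]; omega
        exact ih x' y (τ.symm q) (hQτ' q hQ) hx'0 hy (by omega) h2
    · -- q ∣ y
      obtain ⟨y', hy'⟩ := hd
      have hy'0 : y' ≠ 0 := by rintro rfl; rw [mul_zero] at hy'; exact hy hy'
      have h2 : q₁ * τ x * y' = τ q * τ y' * x := by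
        apply mul_left_cancel₀ hq0
        rw [hy'] at heq
        rw [map_mul] at heq
        linear_combination heq
      have hOm : Om y = Om y' + 1 := by
        rw [hy', Om_mul hq0 hy'0, Om_prime hq]; omega
      exact ih x y' (τ q) (hQτ q hQ) hx hy'0 (by omega) h2

lemma card_le_Om {r : R} (hr : r ≠ 0) (S : Finset ℕ) (g : ℕ → R)
    (hp : ∀ k ∈ S, Prime (g k))
    (hna : ∀ k ∈ S, ∀ l ∈ S, k ≠ l → ¬ Associated (g k) (g l))
    (hdvd : ∀ k ∈ S, g k ∣ r) : S.card ≤ Om r := by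
  classical
  have hprod_dvd : ∀ (S' : Finset ℕ), (∀ j ∈ S', Prime (g j)) →
      (∀ j ∈ S', ∀ l ∈ S', j ≠ l → ¬ Associated (g j) (g l)) →
      (∀ j ∈ S', g j ∣ r) → (∏ j ∈ S', g j) ∣ r ∧ Om (∏ j ∈ S', g j) = S'.card := by
    intro S'
    induction S' using Finset.induction with
    | empty => simp [Om]
    | @insert k' S' hk' ih' =>
      intro h1 h2 h3
      obtain ⟨hd, hOm⟩ := ih' (fun j hj => h1 j (Finset.mem_insert_of_mem hj))
        (fun j hj l hl => h2 j (Finset.mem_insert_of_mem hj) l (Finset.mem_insert_of_mem hl))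
        (fun j hj => h3 j (Finset.mem_insert_of_mem hj))
      have hk'p := h1 k' (Finset.mem_insert_self k' S')
      have hcop' : IsCoprime (g k') (∏ j ∈ S', g j) := by
        apply IsCoprime.prod_right
        intro j hj
        rcases hk'p.irreducible.isCoprime_or_dvd (g j) with h | h
        · exact h
        · exact absurd (hk'p.irreducible.associated_of_dvd
            ((h1 j (Finset.mem_insert_of_mem hj)).irreducible) h)
            (h2 k' (Finset.mem_insert_self k' S') j (Finset.mem_insert_of_mem hj)
              (by rintro rfl; exact hk' hj))
      have hne : (∏ j ∈ S', g j) ≠ 0 :=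
        Finset.prod_ne_zero_iff.mpr fun j hj => (h1 j (Finset.mem_insert_of_mem hj)).ne_zero
      constructor
      · rw [Finset.prod_insert hk']
        exact hcop'.mul_dvd (h3 k' (Finset.mem_insert_self k' S')) hd
      · rw [Finset.prod_insert hk', Om_mul hk'p.ne_zero hne, Om_prime hk'p, hOm,
          Finset.card_insert_of_notMem hk']
        omega
  obtain ⟨hd, hOm⟩ := hprod_dvd S hp hna hdvd
  calc S.card = Om (∏ j ∈ S, g j) := hOm.symm
    _ ≤ Om r := Om_dvd_le hr hd

end aux2

section main
variable {R : Type*} [CommRing R] [IsDomain R] [IsPrincipalIdealRing R]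
  (σ : R ≃+* R) (a a₀ a₁ : R) {n : ℕ} (W : Submodule R (Fin n → R))

lemma inv_apply_apply (σ : R ≃+* R) (x : R) : σ⁻¹ (σ x) = x := σ.symm_apply_apply x

lemma apply_inv_apply (σ : R ≃+* R) (x : R) : σ (σ⁻¹ x) = x := σ.apply_symm_apply x

lemma pow_apply_succ (e : R ≃+* R) (k : ℕ) (x : R) : (e ^ (k+1)) x = e ((e ^ k) x) := by
  rw [pow_succ']; rfl

lemma pow_apply_succ2 (e : R ≃+* R) (k : ℕ) (x : R) : (e ^ (k+1)) x = (e ^ k) (e x) := by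
  rw [pow_succ]; rfl

lemma pow_apply_add (e : R ≃+* R) (k l : ℕ) (x : R) : (e ^ (k+l)) x = (e ^ k) ((e ^ l) x) := by
  rw [pow_add]; rfl

lemma pow_cancel (k : ℕ) (x : R) : (σ ^ k) ((σ⁻¹ ^ k) x) = x := by
  show ((σ ^ k) * (σ⁻¹ ^ k)) x = x
  rw [inv_pow, mul_inv_cancel]; rfl

lemma pow_cancel' (k : ℕ) (x : R) : (σ⁻¹ ^ k) ((σ ^ k) x) = x := by
  show ((σ⁻¹ ^ k) * (σ ^ k)) x = x
  rw [inv_pow, inv_mul_cancel]; rfl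

lemma hXn_mem (hn : 1 ≤ n)
    (hX : ∀ v ∈ W, (fun i : Fin n =>
        if (i : ℕ) = 0 then a₀ * σ⁻¹ (v ⟨n - 1, Nat.sub_lt hn Nat.one_pos⟩)
        else σ⁻¹ (v ⟨(i : ℕ) - 1, Nat.lt_of_le_of_lt (Nat.sub_le _ _) i.isLt⟩)) ∈ W) :
    ∀ v ∈ W, (fun t : Fin n => (σ⁻¹ ^ (t : ℕ)) a₀ * (σ⁻¹ ^ n) (v t)) ∈ W := by
  have key : ∀ k, k ≤ n → ∀ v ∈ W, (fun t : Fin n =>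
      if h : (t : ℕ) < k then
        (σ⁻¹ ^ (t : ℕ)) a₀ * (σ⁻¹ ^ k) (v ⟨(t : ℕ) + n - k, by have := t.isLt; omega⟩)
      else (σ⁻¹ ^ k) (v ⟨(t : ℕ) - k, by have := t.isLt; omega⟩)) ∈ W := by
    intro k
    induction k with
    | zero =>
      intro _ v hv
      have : (fun t : Fin n =>
          if h : (t : ℕ) < 0 then
            (σ⁻¹ ^ (t : ℕ)) a₀ * (σ⁻¹ ^ 0) (v ⟨(t : ℕ) + n - 0, by have := t.isLt; omega⟩)
          else (σ⁻¹ ^ 0) (v ⟨(t : ℕ) - 0, by have := t.isLt; omega⟩)) = v := by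
        funext t
        rw [dif_neg (by omega)]
        simp only [pow_zero, Nat.sub_zero, Fin.eta]
        rfl
      rw [this]; exact hv
    | succ k ih =>
      intro hk v hv
      have hmem := hX _ (ih (by omega) v hv)
      have heq : (fun i : Fin n =>
          if (i : ℕ) = 0 then a₀ * σ⁻¹ ((fun t : Fin n =>
            if h : (t : ℕ) < k then
              (σ⁻¹ ^ (t : ℕ)) a₀ * (σ⁻¹ ^ k) (v ⟨(t : ℕ) + n - k, by have := t.isLt; omega⟩)
            else (σ⁻¹ ^ k) (v ⟨(t : ℕ) - k, by have := t.isLt; omega⟩)) ⟨n - 1, Nat.sub_lt hn Nat.one_pos⟩)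
          else σ⁻¹ ((fun t : Fin n =>
            if h : (t : ℕ) < k then
              (σ⁻¹ ^ (t : ℕ)) a₀ * (σ⁻¹ ^ k) (v ⟨(t : ℕ) + n - k, by have := t.isLt; omega⟩)
            else (σ⁻¹ ^ k) (v ⟨(t : ℕ) - k, by have := t.isLt; omega⟩)) ⟨(i : ℕ) - 1, by have := i.isLt; omega⟩))
          = (fun t : Fin n =>
          if h : (t : ℕ) < k + 1 then
            (σ⁻¹ ^ (t : ℕ)) a₀ * (σ⁻¹ ^ (k+1)) (v ⟨(t : ℕ) + n - (k+1), by have := t.isLt; omega⟩)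
          else (σ⁻¹ ^ (k+1)) (v ⟨(t : ℕ) - (k+1), by have := t.isLt; omega⟩)) := by
        funext t
        by_cases ht0 : (t : ℕ) = 0
        · rw [if_pos ht0]
          simp only
          rw [dif_neg (by omega), dif_pos (by omega)]
          rw [← pow_apply_succ]
          have h1 : (σ⁻¹ ^ (t:ℕ)) a₀ = a₀ := by rw [ht0, pow_zero]; rfl
          rw [h1]
          exact congrArg (fun z => a₀ * (σ⁻¹ ^ (k+1)) (v z)) (by simp only [Fin.ext_iff]; omega)
        · rw [if_neg ht0]
          by_cases htk : (t : ℕ) < k + 1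
          · rw [dif_pos htk]
            simp only
            rw [dif_pos (by omega), map_mul]
            have h1 : σ⁻¹ ((σ⁻¹ ^ ((t:ℕ) - 1)) a₀) = (σ⁻¹ ^ (t:ℕ)) a₀ := by
              rw [← pow_apply_succ, show (t:ℕ) - 1 + 1 = (t:ℕ) from by omega]
            rw [h1, ← pow_apply_succ]
            exact congrArg (fun z => (σ⁻¹ ^ ((t:ℕ))) a₀ * (σ⁻¹ ^ (k+1)) (v z)) (by simp only [Fin.ext_iff]; omega)
          · rw [dif_neg htk]
            simp only
            rw [dif_neg (by omega), ← pow_apply_succ]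
            exact congrArg (fun z => (σ⁻¹ ^ (k+1)) (v z)) (by simp only [Fin.ext_iff]; omega)
      rw [heq] at hmem
      exact hmem
  intro v hv
  have h := key n le_rfl v hv
  have heq : (fun t : Fin n =>
      if h : (t : ℕ) < n then
        (σ⁻¹ ^ (t : ℕ)) a₀ * (σ⁻¹ ^ n) (v ⟨(t : ℕ) + n - n, by have := t.isLt; omega⟩)
      else (σ⁻¹ ^ n) (v ⟨(t : ℕ) - n, by have := t.isLt; omega⟩))
      = (fun t : Fin n => (σ⁻¹ ^ (t : ℕ)) a₀ * (σ⁻¹ ^ n) (v t)) := by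
    funext t
    rw [dif_pos t.isLt]
    exact congrArg (fun z => (σ⁻¹ ^ ((t:ℕ))) a₀ * (σ⁻¹ ^ n) (v z)) (by simp only [Fin.ext_iff]; omega)
  rw [heq] at h
  exact h

lemma sSX1 (hn : 1 ≤ n)
    (hX : ∀ v ∈ W, (fun i : Fin n =>
        if (i : ℕ) = 0 then a₀ * σ⁻¹ (v ⟨n - 1, Nat.sub_lt hn Nat.one_pos⟩)
        else σ⁻¹ (v ⟨(i : ℕ) - 1, Nat.lt_of_le_of_lt (Nat.sub_le _ _) i.isLt⟩)) ∈ W)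
    (j : ℕ) (hj : j + 1 ≤ n - 1) (s : R)
    (h : Pi.single (⟨j, by omega⟩ : Fin n) s ∈ W) :
    Pi.single (⟨j + 1, by omega⟩ : Fin n) (σ⁻¹ s) ∈ W := by
  have hmem := hX _ h
  convert hmem using 1
  funext t
  simp only [Pi.single_apply, Fin.ext_iff]
  by_cases ht0 : (t : ℕ) = 0
  · rw [if_pos ht0, if_neg (show ¬ (t:ℕ) = j + 1 by omega),
      if_neg (show ¬ ((⟨n-1, by omega⟩ : Fin n) : ℕ) = ((⟨j, by omega⟩ : Fin n) : ℕ) by simp; omega),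
      map_zero, mul_zero]
  · rw [if_neg ht0]
    by_cases htj : (t : ℕ) = j + 1
    · rw [if_pos htj, if_pos (show ((⟨(t:ℕ)-1, by have := t.isLt; omega⟩ : Fin n) : ℕ) = ((⟨j, by omega⟩ : Fin n) : ℕ) by simp; omega)]
    · rw [if_neg htj, if_neg (show ¬ ((⟨(t:ℕ)-1, by have := t.isLt; omega⟩ : Fin n) : ℕ) = ((⟨j, by omega⟩ : Fin n) : ℕ) by simp; omega), map_zero]

lemma sSXw (hn : 1 ≤ n)
    (hX : ∀ v ∈ W, (fun i : Fin n =>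
        if (i : ℕ) = 0 then a₀ * σ⁻¹ (v ⟨n - 1, Nat.sub_lt hn Nat.one_pos⟩)
        else σ⁻¹ (v ⟨(i : ℕ) - 1, Nat.lt_of_le_of_lt (Nat.sub_le _ _) i.isLt⟩)) ∈ W)
    (s : R) (h : Pi.single (⟨n - 1, Nat.sub_lt hn Nat.one_pos⟩ : Fin n) s ∈ W) :
    Pi.single (⟨0, by omega⟩ : Fin n) (a₀ * σ⁻¹ s) ∈ W := by
  have hmem := hX _ h
  convert hmem using 1
  funext t
  simp only [Pi.single_apply, Fin.ext_iff]
  by_cases ht0 : (t : ℕ) = 0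
  · rw [if_pos ht0, if_pos (show (t:ℕ) = ((⟨0, by omega⟩ : Fin n) : ℕ) by simp; omega),
      if_pos trivial]
  · rw [if_neg ht0, if_neg (show ¬ (t:ℕ) = ((⟨0, by omega⟩ : Fin n) : ℕ) by simp; omega),
      if_neg (show ¬ ((⟨(t:ℕ)-1, by have := t.isLt; omega⟩ : Fin n) : ℕ) = ((⟨n-1, by omega⟩ : Fin n) : ℕ) by simp; have := t.isLt; omega), map_zero]

lemma sSY1 (hn : 1 ≤ n)
    (hY : ∀ v ∈ W, (fun i : Fin n =>
        if h : (i : ℕ) = n - 1 then σ (a₁ * v ⟨0, hn⟩)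
        else σ (a * v ⟨(i : ℕ) + 1, Nat.lt_of_le_of_ne i.isLt (fun e => h (by omega))⟩)) ∈ W)
    (j : ℕ) (hj1 : 1 ≤ j) (hj2 : j ≤ n - 1) (s : R)
    (h : Pi.single (⟨j, by omega⟩ : Fin n) s ∈ W) :
    Pi.single (⟨j - 1, by omega⟩ : Fin n) (σ (a * s)) ∈ W := by
  have hmem := hY _ h
  convert hmem using 1
  funext t
  simp only [Pi.single_apply, Fin.ext_iff]
  by_cases htn : (t : ℕ) = n - 1
  · rw [dif_pos htn, if_neg (show ¬ (t:ℕ) = ((⟨j-1, by omega⟩ : Fin n) : ℕ) by simp; omega),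
      if_neg (show ¬ ((⟨0, by omega⟩ : Fin n) : ℕ) = ((⟨j, by omega⟩ : Fin n) : ℕ) by simp; omega),
      mul_zero, map_zero]
  · rw [dif_neg htn]
    by_cases htj : (t : ℕ) = j - 1
    · rw [if_pos (show (t:ℕ) = ((⟨j-1, by omega⟩ : Fin n) : ℕ) by simp; omega),
        if_pos (show ((⟨(t:ℕ)+1, by have := t.isLt; omega⟩ : Fin n) : ℕ) = ((⟨j, by omega⟩ : Fin n) : ℕ) by simp; omega)]
    · rw [if_neg (show ¬ (t:ℕ) = ((⟨j-1, by omega⟩ : Fin n) : ℕ) by simp; omega),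
        if_neg (show ¬ ((⟨(t:ℕ)+1, by have := t.isLt; omega⟩ : Fin n) : ℕ) = ((⟨j, by omega⟩ : Fin n) : ℕ) by simp; omega),
        mul_zero, map_zero]

lemma sSYw (hn : 1 ≤ n)
    (hY : ∀ v ∈ W, (fun i : Fin n =>
        if h : (i : ℕ) = n - 1 then σ (a₁ * v ⟨0, hn⟩)
        else σ (a * v ⟨(i : ℕ) + 1, Nat.lt_of_le_of_ne i.isLt (fun e => h (by omega))⟩)) ∈ W)
    (s : R) (h : Pi.single (⟨0, by omega⟩ : Fin n) s ∈ W) :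
    Pi.single (⟨n - 1, Nat.sub_lt hn Nat.one_pos⟩ : Fin n) (σ (a₁ * s)) ∈ W := by
  have hmem := hY _ h
  convert hmem using 1
  funext t
  simp only [Pi.single_apply, Fin.ext_iff]
  by_cases htn : (t : ℕ) = n - 1
  · rw [dif_pos htn, if_pos (show (t:ℕ) = ((⟨n-1, by omega⟩ : Fin n) : ℕ) by simp; omega),
      if_pos trivial]
  · rw [dif_neg htn, if_neg (show ¬ (t:ℕ) = ((⟨n-1, by omega⟩ : Fin n) : ℕ) by simp; omega),
      if_neg (show ¬ ((⟨(t:ℕ)+1, by have := t.isLt; omega⟩ : Fin n) : ℕ) = ((⟨0, by omega⟩ : Fin n) : ℕ) by simp),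
      mul_zero, map_zero]

def GoodA (σ : R ≃+* R) (a : R) (c : R) : Prop :=
  ∀ q : R, Prime q → q ∣ c → ∃ m : ℕ, 1 ≤ m ∧ q ∣ (σ ^ m) a

lemma goodA_one : GoodA σ a (1 : R) :=
  fun q hq hd => absurd (isUnit_of_dvd_one hd) hq.not_unit

lemma goodA_sigma_mul {c : R} (hc : GoodA σ a c) : GoodA σ a (σ a * σ c) := by
  intro q hq hd
  rcases hq.dvd_mul.mp hd with hd | hd
  · exact ⟨1, le_rfl, by rwa [pow_one]⟩
  · have h2 : σ⁻¹ q ∣ c := by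
      have := map_dvd (σ⁻¹ : R ≃+* R) hd
      rwa [inv_apply_apply] at this
    obtain ⟨m, hm, hd'⟩ := hc (σ⁻¹ q) (eqv_prime σ⁻¹ hq) h2
    refine ⟨m + 1, by omega, ?_⟩
    have := map_dvd σ hd'
    rwa [apply_inv_apply, ← pow_apply_succ] at this

lemma walkX (hn : 1 ≤ n)
    (hX : ∀ v ∈ W, (fun i : Fin n =>
        if (i : ℕ) = 0 then a₀ * σ⁻¹ (v ⟨n - 1, Nat.sub_lt hn Nat.one_pos⟩)
        else σ⁻¹ (v ⟨(i : ℕ) - 1, Nat.lt_of_le_of_lt (Nat.sub_le _ _) i.isLt⟩)) ∈ W) :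
    ∀ (k j : ℕ) (h : j + k ≤ n - 1) (s : R),
      Pi.single (⟨j, by omega⟩ : Fin n) s ∈ W →
      Pi.single (⟨j + k, by omega⟩ : Fin n) ((σ⁻¹ ^ k) s) ∈ W := by
  intro k
  induction k with
  | zero =>
    intro j hj s h
    rw [pow_zero]
    exact h
  | succ k ih =>
    intro j hj s h
    have h1 := ih j (by omega) s h
    have h2 := sSX1 (σ := σ) (a₀ := a₀) (W := W) hn hX (j + k) (by omega) _ h1
    rw [← pow_apply_succ] at h2
    exact h2

lemma walkY (hn : 1 ≤ n)
    (hY : ∀ v ∈ W, (fun i : Fin n =>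
        if h : (i : ℕ) = n - 1 then σ (a₁ * v ⟨0, hn⟩)
        else σ (a * v ⟨(i : ℕ) + 1, Nat.lt_of_le_of_ne i.isLt (fun e => h (by omega))⟩)) ∈ W) :
    ∀ (k j : ℕ) (h1 : k ≤ j) (h2 : j ≤ n - 1) (s : R),
      Pi.single (⟨j, by omega⟩ : Fin n) s ∈ W →
      ∃ c : R, GoodA σ a c ∧
        Pi.single (⟨j - k, by omega⟩ : Fin n) (c * (σ ^ k) s) ∈ W := by
  intro k
  induction k with
  | zero =>
    intro j hj1 hj2 s h
    refine ⟨1, goodA_one σ a, ?_⟩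
    rw [pow_zero, one_mul]
    exact h
  | succ k ih =>
    intro j hj1 hj2 s h
    obtain ⟨c, hc, h1⟩ := ih j (by omega) hj2 s h
    have h2 := sSY1 (σ := σ) (a := a) (a₁ := a₁) (W := W) hn hY (j - k) (by omega) (by omega) _ h1
    refine ⟨σ a * σ c, goodA_sigma_mul σ a hc, ?_⟩
    have hval : σ (a * (c * (σ ^ k) s)) = σ a * σ c * (σ ^ (k+1)) s := by
      rw [map_mul, map_mul, pow_apply_succ, mul_assoc]
    rw [hval] at h2
    exact h2

lemma irred_map (e : R ≃+* R) {z : R} (hz : Irreducible z) : Irreducible (e z) :=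
  (UniqueFactorizationMonoid.irreducible_iff_prime).mpr
    (eqv_prime e ((UniqueFactorizationMonoid.irreducible_iff_prime).mp hz))

lemma not_assoc_inv_pow
    (horb : ∀ z : R, Irreducible z → ∀ m : ℕ, 1 ≤ m → ¬ Associated ((σ ^ m) z) z)
    (z : R) (hz : Irreducible z) (m : ℕ) (hm : 1 ≤ m) : ¬ Associated ((σ⁻¹ ^ m) z) z := by
  intro h
  have hw : (σ ^ m) ((σ⁻¹ ^ m) z) = z := pow_cancel σ m z
  exact horb ((σ⁻¹ ^ m) z) (irred_map _ hz) m hm (by rw [hw]; exact h.symm)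

lemma assoc_inv_pow_inj
    (horb : ∀ z : R, Irreducible z → ∀ m : ℕ, 1 ≤ m → ¬ Associated ((σ ^ m) z) z)
    {z : R} (hz : Irreducible z) :
    ∀ u v : ℕ, Associated ((σ⁻¹ ^ u) z) ((σ⁻¹ ^ v) z) → u = v := by
  have main : ∀ u v : ℕ, u < v → ¬ Associated ((σ⁻¹ ^ u) z) ((σ⁻¹ ^ v) z) := by
    intro u v huv h
    have h2 := eqv_assoc (σ ^ u) h
    rw [pow_cancel, show v = u + (v - u) from by omega, pow_apply_add, pow_cancel] at h2
    exact not_assoc_inv_pow σ horb z hz (v - u) (by omega) h2.symm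
  intro u v h
  rcases Nat.lt_trichotomy u v with h1 | h1 | h1
  · exact absurd h (main u v h1)
  · exact h1
  · exact absurd h.symm (main v u h1)

lemma assoc_pow_inj
    (horb : ∀ z : R, Irreducible z → ∀ m : ℕ, 1 ≤ m → ¬ Associated ((σ ^ m) z) z)
    {z : R} (hz : Irreducible z) :
    ∀ u v : ℕ, Associated ((σ ^ u) z) ((σ ^ v) z) → u = v := by
  intro u v h
  have e1 : (σ⁻¹ ^ (v + u)) ((σ ^ u) z) = (σ⁻¹ ^ v) z := by rw [pow_apply_add, pow_cancel']
  have e2 : (σ⁻¹ ^ (u + v)) ((σ ^ v) z) = (σ⁻¹ ^ u) z := by rw [pow_apply_add, pow_cancel']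
  have h2 := eqv_assoc (σ⁻¹ ^ (v + u)) h
  rw [e1, show v + u = u + v from by omega, e2] at h2
  exact (assoc_inv_pow_inj σ horb hz v u h2).symm

lemma orbit_pow (t : ℤ) :
    ∃ m : ℕ, ((σ⁻¹ ^ n : R ≃+* R) ^ t) = (σ⁻¹ ^ (n * m)) ∨
      ((σ⁻¹ ^ n : R ≃+* R) ^ t) = (σ ^ (n * m)) := by
  cases t with
  | ofNat m => exact ⟨m, Or.inl (by rw [Int.ofNat_eq_natCast, zpow_natCast, ← pow_mul])⟩
  | negSucc m =>
    exact ⟨m + 1, Or.inr (by rw [zpow_negSucc, ← pow_mul, inv_pow, inv_inv])⟩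

lemma memK_X (hn : 1 ≤ n)
    (hX : ∀ v ∈ W, (fun i : Fin n =>
        if (i : ℕ) = 0 then a₀ * σ⁻¹ (v ⟨n - 1, Nat.sub_lt hn Nat.one_pos⟩)
        else σ⁻¹ (v ⟨(i : ℕ) - 1, Nat.lt_of_le_of_lt (Nat.sub_le _ _) i.isLt⟩)) ∈ W) (r : R)
    (h : Pi.single (⟨n - 1, Nat.sub_lt hn Nat.one_pos⟩ : Fin n) r ∈ W) :
    Pi.single (⟨n - 1, Nat.sub_lt hn Nat.one_pos⟩ : Fin n) ((σ⁻¹ ^ (n - 1)) a₀ * (σ⁻¹ ^ n) r) ∈ W := by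
  have h0 := sSXw (σ := σ) (a₀ := a₀) (W := W) hn hX r h
  have h1 := walkX (σ := σ) (a₀ := a₀) (W := W) hn hX (n - 1) 0 (by omega) _ h0
  have hidx : (⟨0 + (n - 1), by omega⟩ : Fin n) = (⟨n - 1, Nat.sub_lt hn Nat.one_pos⟩ : Fin n) := by
    simp only [Fin.ext_iff]; omega
  rw [hidx] at h1
  have hval : (σ⁻¹ ^ (n - 1)) (a₀ * σ⁻¹ r) = (σ⁻¹ ^ (n - 1)) a₀ * (σ⁻¹ ^ n) r := by
    rw [map_mul, ← pow_apply_succ2, show n - 1 + 1 = n from by omega]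
  rw [hval] at h1
  exact h1

lemma memK_Y (hn : 1 ≤ n) (hfac : a = a₀ * a₁)
    (hY : ∀ v ∈ W, (fun i : Fin n =>
        if h : (i : ℕ) = n - 1 then σ (a₁ * v ⟨0, hn⟩)
        else σ (a * v ⟨(i : ℕ) + 1, Nat.lt_of_le_of_ne i.isLt (fun e => h (by omega))⟩)) ∈ W) (r : R)
    (h : Pi.single (⟨n - 1, Nat.sub_lt hn Nat.one_pos⟩ : Fin n) r ∈ W) :
    ∃ c : R, GoodA σ a c ∧
      Pi.single (⟨n - 1, Nat.sub_lt hn Nat.one_pos⟩ : Fin n) (c * (σ ^ n) r) ∈ W := by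
  obtain ⟨c₁, hc₁, h1⟩ := walkY (σ := σ) (a := a) (a₁ := a₁) (W := W) hn hY
    (n - 1) (n - 1) le_rfl le_rfl r h
  have hidx : (⟨(n - 1) - (n - 1), by omega⟩ : Fin n) = (⟨0, by omega⟩ : Fin n) := by
    simp only [Fin.ext_iff]; omega
  rw [hidx] at h1
  have h2 := sSYw (σ := σ) (a := a) (a₁ := a₁) (W := W) hn hY _ h1
  refine ⟨σ a₁ * σ c₁, ?_, ?_⟩
  · intro q hq hd
    rcases hq.dvd_mul.mp hd with hd | hd
    · exact ⟨1, le_rfl, by rw [pow_one]; exact hd.trans (map_dvd σ ⟨a₀, by rw [hfac]; ring⟩)⟩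
    · have h3 : σ⁻¹ q ∣ c₁ := by
        have := map_dvd (σ⁻¹ : R ≃+* R) hd
        rwa [inv_apply_apply] at this
      obtain ⟨m, hm, hd'⟩ := hc₁ _ (eqv_prime σ⁻¹ hq) h3
      refine ⟨m + 1, by omega, ?_⟩
      have := map_dvd σ hd'
      rwa [apply_inv_apply, ← pow_apply_succ] at this
  · have hval : σ (a₁ * (c₁ * (σ ^ (n - 1)) r)) = σ a₁ * σ c₁ * (σ ^ n) r := by
      rw [map_mul, map_mul, ← pow_apply_succ, show n - 1 + 1 = n from by omega, ← mul_assoc]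
    rw [hval] at h2
    exact h2

lemma single_mul_eq_smul (j : Fin n) (u x : R) :
    (Pi.single j (u * x) : Fin n → R) = u • (Pi.single j x : Fin n → R) := by
  classical
  funext t
  rcases eq_or_ne t j with rfl | htj
  · rw [Pi.single_eq_same, Pi.smul_apply, Pi.single_eq_same, smul_eq_mul]
  · rw [Pi.single_eq_of_ne htj, Pi.smul_apply, Pi.single_eq_of_ne htj, smul_eq_mul, mul_zero]

end main

/-- Simplicity of the rank-`n` `R`-free module `V_n(a₀)` over the
generalized Weyl algebra `R(σ,a)`, where `a₀` is a minimal irreducible factor of `a`: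
the only `R`-submodules of `R^n` stable under the actions `X` of `x` and `Y` of `y`
are `0` and `R^n`. -/
theorem stmt_0 {R : Type*} [CommRing R] [IsDomain R] [IsPrincipalIdealRing R]
    (σ : R ≃+* R)
    (horb : ∀ z : R, Irreducible z → ∀ m : ℕ, 1 ≤ m → ¬ Associated ((σ ^ m) z) z)
    (a a₀ a₁ : R) (ha : a ≠ 0) (hnu : ¬ IsUnit a)
    (ha₀ : Irreducible a₀) (hfac : a = a₀ * a₁)
    (hmin : ∀ k : ℕ, 0 < k → ¬ ((σ⁻¹ ^ k) a₀ ∣ a))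
    (n : ℕ) (hn : 1 ≤ n)
    (W : Submodule R (Fin n → R))
    (hX : ∀ v ∈ W, (fun i : Fin n =>
        if (i : ℕ) = 0 then a₀ * σ⁻¹ (v ⟨n - 1, by omega⟩)
        else σ⁻¹ (v ⟨(i : ℕ) - 1, by have := i.isLt; omega⟩)) ∈ W)
    (hY : ∀ v ∈ W, (fun i : Fin n =>
        if h : (i : ℕ) = n - 1 then σ (a₁ * v ⟨0, by omega⟩)
        else σ (a * v ⟨(i : ℕ) + 1, by have := i.isLt; omega⟩)) ∈ W) :
    W = ⊥ ∨ W = ⊤ := by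
  classical
  by_cases hbot : W = ⊥
  · exact Or.inl hbot
  right
  have hprime : Prime a₀ := (UniqueFactorizationMonoid.irreducible_iff_prime).mp ha₀
  -- Step A: W contains a nonzero single-coordinate vector
  obtain ⟨v₀, hv₀W, hv₀⟩ := (Submodule.ne_bot_iff W).mp hbot
  have hsingle : ∃ (j : Fin n) (r : R), r ≠ 0 ∧ Pi.single j r ∈ W := by
    have hred : ∀ s : ℕ, ∀ v : Fin n → R, v ∈ W → v ≠ 0 →
        (Finset.univ.filter (fun t => v t ≠ 0)).card = s →
        ∃ (j : Fin n) (r : R), r ≠ 0 ∧ Pi.single j r ∈ W := by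
      intro s
      induction s using Nat.strong_induction_on with
      | _ s ih =>
        intro v hv hv0 hcard
        obtain ⟨j, hj⟩ : ∃ j, v j ≠ 0 := by
          by_contra hc; push_neg at hc; exact hv0 (funext fun t => hc t)
        by_cases hone : ∀ t, t ≠ j → v t = 0
        · refine ⟨j, v j, hj, ?_⟩
          have hvs : Pi.single j (v j) = v := by
            funext t
            rcases eq_or_ne t j with rfl | htj
            · rw [Pi.single_eq_same]
            · rw [Pi.single_eq_of_ne htj, hone t htj]
          rw [hvs]; exact hv
        · push_neg at hone
          obtain ⟨i, hij, hvi⟩ := hone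
          have hu := hXn_mem (σ := σ) (a₀ := a₀) (W := W) hn hX v hv
          set v' : Fin n → R := ((σ⁻¹ ^ (i : ℕ)) a₀ * (σ⁻¹ ^ n) (v i)) • v -
            (v i) • (fun t : Fin n => (σ⁻¹ ^ (t : ℕ)) a₀ * (σ⁻¹ ^ n) (v t)) with hv'def
          have hv'W : v' ∈ W := W.sub_mem (W.smul_mem _ hv) (W.smul_mem _ hu)
          have hv't : ∀ t, v' t = ((σ⁻¹ ^ (i : ℕ)) a₀ * (σ⁻¹ ^ n) (v i)) * v t -
              v i * ((σ⁻¹ ^ (t : ℕ)) a₀ * (σ⁻¹ ^ n) (v t)) := by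
            intro t
            rw [hv'def]
            simp [Pi.sub_apply, Pi.smul_apply, smul_eq_mul]
          have hv'i : v' i = 0 := by rw [hv't i]; ring
          have hv'j : v' j ≠ 0 := by
            rw [hv't j]
            intro heq0
            have heq : ((σ⁻¹ ^ (i : ℕ)) a₀) * ((σ⁻¹ ^ n : R ≃+* R) (v i)) * (v j)
                = ((σ⁻¹ ^ (j : ℕ)) a₀) * ((σ⁻¹ ^ n : R ≃+* R) (v j)) * (v i) := by
              linear_combination heq0
            refine key_descent (σ⁻¹ ^ n) ((σ⁻¹ ^ (i : ℕ)) a₀) (eqv_prime _ hprime)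
              (fun q => ∃ t : ℤ, q = (((σ⁻¹ ^ n : R ≃+* R)) ^ t) ((σ⁻¹ ^ (j : ℕ)) a₀))
              ?_ ?_ ?_ ?_
              (Om (v i) + Om (v j) + 1) (v i) (v j) _
              ⟨0, by rw [zpow_zero]; rfl⟩ hvi hj (by omega) heq
            · rintro q ⟨t, rfl⟩
              exact eqv_prime _ (eqv_prime _ hprime)
            · rintro q ⟨t, rfl⟩
              exact ⟨1 + t, by rw [zpow_one_add]; rfl⟩
            · rintro q ⟨t, rfl⟩
              exact ⟨-1 + t, by rw [zpow_add, zpow_neg_one]; rfl⟩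
            · rintro q ⟨t, rfl⟩ hA
              obtain ⟨m, hm | hm⟩ := orbit_pow (σ := σ) (n := n) t
              · rw [hm, ← pow_apply_add] at hA
                have hEq := assoc_inv_pow_inj σ horb ha₀ (i : ℕ) (n * m + (j : ℕ)) hA
                have hij' : (i : ℕ) ≠ (j : ℕ) := fun h => hij (Fin.ext h)
                rcases Nat.eq_zero_or_pos m with rfl | hm1
                · simp at hEq; omega
                · have : n ≤ n * m := Nat.le_mul_of_pos_right n hm1
                  have := i.isLt; have := j.isLt; omega
              · rw [hm] at hA
                have hA2 := eqv_assoc (σ⁻¹ ^ (n * m)) hA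
                rw [← pow_apply_add, pow_cancel'] at hA2
                have hEq := assoc_inv_pow_inj σ horb ha₀ (n * m + (i : ℕ)) (j : ℕ) hA2
                have hij' : (i : ℕ) ≠ (j : ℕ) := fun h => hij (Fin.ext h)
                rcases Nat.eq_zero_or_pos m with rfl | hm1
                · simp at hEq; omega
                · have : n ≤ n * m := Nat.le_mul_of_pos_right n hm1
                  have := i.isLt; have := j.isLt; omega
          have hv'0 : v' ≠ 0 := fun h0 => hv'j (by rw [h0]; rfl)
          have hsubset : (Finset.univ.filter (fun t => v' t ≠ 0)) ⊆
              (Finset.univ.filter (fun t => v t ≠ 0)) := by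
            intro t ht
            simp only [Finset.mem_filter, Finset.mem_univ, true_and] at *
            intro hvt
            apply ht
            rw [hv't t, hvt]
            rw [map_zero]
            ring
          have hss : (Finset.univ.filter (fun t => v' t ≠ 0)) ⊂
              (Finset.univ.filter (fun t => v t ≠ 0)) :=
            (Finset.ssubset_iff_of_subset hsubset).mpr
              ⟨i, Finset.mem_filter.mpr ⟨Finset.mem_univ i, hvi⟩,
                fun hmem => (Finset.mem_filter.mp hmem).2 hv'i⟩
          exact ih _ (by rw [← hcard]; exact Finset.card_lt_card hss) v' hv'W hv'0 rfl
    exact hred _ v₀ hv₀W hv₀ rfl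
  -- Step B: move it to coordinate n-1
  have hlast : ∃ r : R, r ≠ 0 ∧ Pi.single (⟨n - 1, by omega⟩ : Fin n) r ∈ W := by
    obtain ⟨j, r, hr, hjr⟩ := hsingle
    have hj' : Pi.single (⟨(j : ℕ), by have := j.isLt; omega⟩ : Fin n) r ∈ W := by
      have hjj : (⟨(j : ℕ), by have := j.isLt; omega⟩ : Fin n) = j := by
        simp only [Fin.ext_iff]
      rw [hjj]; exact hjr
    have hw := walkX (σ := σ) (a₀ := a₀) (W := W) hn hX (n - 1 - (j : ℕ)) (j : ℕ)
      (by have := j.isLt; omega) r hj'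
    have hidx : (⟨(j : ℕ) + (n - 1 - (j : ℕ)), by have := j.isLt; omega⟩ : Fin n)
        = (⟨n - 1, by omega⟩ : Fin n) := by
      simp only [Fin.ext_iff]; have := j.isLt; omega
    rw [hidx] at hw
    refine ⟨_, fun h0 => hr ?_, hw⟩
    exact (σ⁻¹ ^ (n - 1 - (j : ℕ)) : R ≃+* R).injective (h0.trans (map_zero _).symm)
  obtain ⟨r1, hr1, hr1W⟩ := hlast
  -- coordinate ideals
  have hKmem : ∀ (j : Fin n) (x : R),
      x ∈ Submodule.comap (LinearMap.single R (fun _ : Fin n => R) j) W ↔ Pi.single j x ∈ W := by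
    intro j x
    rw [Submodule.mem_comap, LinearMap.single_apply]
  -- Step C: 1 is in the coordinate ideal at n-1
  have hone : Pi.single (⟨n - 1, by omega⟩ : Fin n) (1 : R) ∈ W := by
    by_contra hno
    set K : Ideal R :=
      Submodule.comap (LinearMap.single R (fun _ : Fin n => R) (⟨n - 1, by omega⟩ : Fin n)) W with hK
    haveI := IsPrincipalIdealRing.principal K
    set g : R := Submodule.IsPrincipal.generator K with hg
    have hgd : ∀ x ∈ K, g ∣ x := fun x hx => (Submodule.IsPrincipal.mem_iff_generator_dvd K).mp hx
    have hgu : ¬ IsUnit g := fun hu => hno ((hKmem _ 1).mp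
      ((Submodule.IsPrincipal.mem_iff_generator_dvd K).mpr hu.dvd))
    have hg0 : g ≠ 0 := by
      intro h0
      have := hgd r1 ((hKmem _ r1).mpr hr1W)
      rw [h0, zero_dvd_iff] at this
      exact hr1 this
    obtain ⟨q, hqirr, hqg⟩ := WfDvdMonoid.exists_irreducible_factor hgu hg0
    have hq : Prime q := (UniqueFactorizationMonoid.irreducible_iff_prime).mp hqirr
    have hqK : ∀ x ∈ K, q ∣ x := fun x hx => hqg.trans (hgd x hx)
    -- family from X-iterations
    have famX : ∀ k : ℕ, ∃ c : R,
        (∀ p : R, Prime p → p ∣ c → ∃ t, 1 ≤ t ∧ p ∣ (σ⁻¹ ^ (t * n - 1)) a₀)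
        ∧ c * (σ⁻¹ ^ (k * n)) r1 ∈ K := by
      intro k
      induction k with
      | zero =>
        refine ⟨1, fun p hp hd => absurd (isUnit_of_dvd_one hd) hp.not_unit, ?_⟩
        rw [one_mul, Nat.zero_mul, pow_zero]
        exact (hKmem _ r1).mpr hr1W
      | succ k ihk =>
        obtain ⟨c, hGc, hmem⟩ := ihk
        have hs := memK_X (σ := σ) (a₀ := a₀) (W := W) hn hX _ ((hKmem _ _).mp hmem)
        have hval : (σ⁻¹ ^ (n - 1)) a₀ * (σ⁻¹ ^ n : R ≃+* R) (c * (σ⁻¹ ^ (k * n)) r1)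
            = ((σ⁻¹ ^ (n - 1)) a₀ * (σ⁻¹ ^ n : R ≃+* R) c) * (σ⁻¹ ^ ((k + 1) * n)) r1 := by
          rw [map_mul, ← pow_apply_add, show n + k * n = (k + 1) * n from by ring, mul_assoc]
        rw [hval] at hs
        refine ⟨(σ⁻¹ ^ (n - 1)) a₀ * (σ⁻¹ ^ n : R ≃+* R) c, ?_, (hKmem _ _).mpr hs⟩
        intro p hp hd
        rcases hp.dvd_mul.mp hd with hd | hd
        · exact ⟨1, le_rfl, by rw [show 1 * n - 1 = n - 1 from by omega]; exact hd⟩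
        · have h3 : (σ ^ n) p ∣ c := by
            have := map_dvd (σ ^ n : R ≃+* R) hd
            rwa [pow_cancel] at this
          obtain ⟨t, ht, hd'⟩ := hGc _ (eqv_prime (σ ^ n : R ≃+* R) hp) h3
          refine ⟨t + 1, by omega, ?_⟩
          have h4 := map_dvd (σ⁻¹ ^ n : R ≃+* R) hd'
          rw [pow_cancel', ← pow_apply_add] at h4
          have htn : 1 ≤ t * n := Nat.mul_le_mul ht hn
          rwa [show n + (t * n - 1) = (t + 1) * n - 1 from by
            have hsm : (t + 1) * n = t * n + n := by ring
            omega] at h4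
    -- family from Y-iterations
    have famY : ∀ k : ℕ, ∃ c : R, GoodA σ a c ∧ c * (σ ^ (k * n)) r1 ∈ K := by
      intro k
      induction k with
      | zero =>
        refine ⟨1, goodA_one σ a, ?_⟩
        rw [one_mul, Nat.zero_mul, pow_zero]
        exact (hKmem _ r1).mpr hr1W
      | succ k ihk =>
        obtain ⟨c, hGc, hmem⟩ := ihk
        obtain ⟨c₂, hGc₂, hs⟩ := memK_Y (σ := σ) (a := a) (a₀ := a₀) (a₁ := a₁) (W := W)
          hn hfac hY _ ((hKmem _ _).mp hmem)
        have hval : c₂ * (σ ^ n : R ≃+* R) (c * (σ ^ (k * n)) r1)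
            = (c₂ * (σ ^ n : R ≃+* R) c) * (σ ^ ((k + 1) * n)) r1 := by
          rw [map_mul, ← pow_apply_add, show n + k * n = (k + 1) * n from by ring, mul_assoc]
        rw [hval] at hs
        refine ⟨c₂ * (σ ^ n : R ≃+* R) c, ?_, (hKmem _ _).mpr hs⟩
        intro p hp hd
        rcases hp.dvd_mul.mp hd with hd | hd
        · exact hGc₂ p hp hd
        · have h3 : (σ⁻¹ ^ n) p ∣ c := by
            have := map_dvd (σ⁻¹ ^ n : R ≃+* R) hd
            rwa [pow_cancel'] at this
          obtain ⟨m, hm, hd'⟩ := hGc _ (eqv_prime (σ⁻¹ ^ n : R ≃+* R) hp) h3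
          refine ⟨n + m, by omega, ?_⟩
          have h4 := map_dvd (σ ^ n : R ≃+* R) hd'
          rwa [pow_cancel, ← pow_apply_add] at h4
    -- choose k₁, k₂ avoiding divisibility of r1
    have hk₁ : ∃ k, 1 ≤ k ∧ ¬ ((σ ^ (k * n)) q ∣ r1) := by
      by_contra hc
      push_neg at hc
      have hcard := card_le_Om hr1 (Finset.Icc 1 (Om r1 + 1)) (fun k => (σ ^ (k * n)) q)
        (fun k _ => eqv_prime _ hq)
        (fun k _ l _ hkl hA => hkl (Nat.eq_of_mul_eq_mul_right (by omega)
          (assoc_pow_inj σ horb hqirr (k * n) (l * n) hA)))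
        (fun k hk => hc k (Finset.mem_Icc.mp hk).1)
      rw [Nat.card_Icc] at hcard
      omega
    have hk₂ : ∃ k, 1 ≤ k ∧ ¬ ((σ⁻¹ ^ (k * n)) q ∣ r1) := by
      by_contra hc
      push_neg at hc
      have hcard := card_le_Om hr1 (Finset.Icc 1 (Om r1 + 1)) (fun k => (σ⁻¹ ^ (k * n)) q)
        (fun k _ => eqv_prime _ hq)
        (fun k _ l _ hkl hA => hkl (Nat.eq_of_mul_eq_mul_right (by omega)
          (assoc_inv_pow_inj σ horb hqirr (k * n) (l * n) hA)))
        (fun k hk => hc k (Finset.mem_Icc.mp hk).1)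
      rw [Nat.card_Icc] at hcard
      omega
    obtain ⟨k₁, hk₁1, hk₁d⟩ := hk₁
    obtain ⟨k₂, hk₂1, hk₂d⟩ := hk₂
    obtain ⟨c, hGc, hmem⟩ := famX k₁
    have hqc : q ∣ c := by
      rcases hq.dvd_mul.mp (hqK _ hmem) with h | h
      · exact h
      · exfalso
        apply hk₁d
        have := map_dvd (σ ^ (k₁ * n) : R ≃+* R) h
        rwa [pow_cancel] at this
    obtain ⟨t, ht, hta⟩ := hGc q hq hqc
    obtain ⟨c', hGc', hmem'⟩ := famY k₂
    have hqc' : q ∣ c' := by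
      rcases hq.dvd_mul.mp (hqK _ hmem') with h | h
      · exact h
      · exfalso
        apply hk₂d
        have := map_dvd (σ⁻¹ ^ (k₂ * n) : R ≃+* R) h
        rwa [pow_cancel'] at this
    obtain ⟨m, hm, hma⟩ := hGc' q hq hqc'
    have hassoc : Associated q ((σ⁻¹ ^ (t * n - 1)) a₀) :=
      hqirr.associated_of_dvd (irred_map _ ha₀) hta
    have hd2 : (σ⁻¹ ^ (t * n - 1)) a₀ ∣ (σ ^ m) a := hassoc.symm.dvd.trans hma
    have hd3 : (σ⁻¹ ^ (m + (t * n - 1))) a₀ ∣ a := by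
      have := map_dvd (σ⁻¹ ^ m : R ≃+* R) hd2
      rwa [← pow_apply_add, pow_cancel'] at this
    exact hmin (m + (t * n - 1)) (by omega) hd3
  -- Step D: all basis vectors
  have hbasis : ∀ j : Fin n, Pi.single j (1 : R) ∈ W := by
    intro j
    have h0 := sSXw (σ := σ) (a₀ := a₀) (W := W) hn hX 1 hone
    rw [map_one, mul_one] at h0
    have h1 := walkX (σ := σ) (a₀ := a₀) (W := W) hn hX (j : ℕ) 0
      (by have := j.isLt; omega) a₀ h0
    have hidx1 : (⟨0 + (j : ℕ), by have := j.isLt; omega⟩ : Fin n) = j := by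
      simp only [Fin.ext_iff]; omega
    rw [hidx1] at h1
    obtain ⟨c, hGc, h2⟩ := walkY (σ := σ) (a := a) (a₁ := a₁) (W := W) hn hY
      (n - 1 - (j : ℕ)) (n - 1) (by omega) le_rfl 1 hone
    have hidx2 : (⟨(n - 1) - (n - 1 - (j : ℕ)), by have := j.isLt; omega⟩ : Fin n) = j := by
      simp only [Fin.ext_iff]; have := j.isLt; omega
    rw [map_one, mul_one, hidx2] at h2
    have hp' : Irreducible ((σ⁻¹ ^ (j : ℕ)) a₀) := irred_map _ ha₀
    rcases hp'.isCoprime_or_dvd c with hco | hdv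
    · obtain ⟨u, w, huw⟩ := hco
      have hmem : Pi.single j (u * (σ⁻¹ ^ (j : ℕ)) a₀ + w * c) ∈ W := by
        rw [Pi.single_add]
        refine W.add_mem ?_ ?_
        · rw [single_mul_eq_smul j u ((σ⁻¹ ^ (j : ℕ)) a₀)]; exact W.smul_mem u h1
        · rw [single_mul_eq_smul j w c]; exact W.smul_mem w h2
      rwa [huw] at hmem
    · exfalso
      obtain ⟨m, hm, hd⟩ := hGc _ ((UniqueFactorizationMonoid.irreducible_iff_prime).mp hp') hdv
      have hd3 : (σ⁻¹ ^ (m + (j : ℕ))) a₀ ∣ a := by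
        have := map_dvd (σ⁻¹ ^ m : R ≃+* R) hd
        rwa [← pow_apply_add, pow_cancel'] at this
      exact hmin (m + (j : ℕ)) (by omega) hd3
  -- conclude
  refine Submodule.eq_top_iff'.mpr ?_
  intro x
  have hx : x = ∑ j : Fin n, Pi.single j (x j) := (Finset.univ_sum_single x).symm
  rw [hx]
  refine Submodule.sum_mem W ?_
  intro j _
  have he := single_mul_eq_smul j (x j) (1 : R)
  rw [mul_one] at he
  rw [he]
  exact W.smul_mem _ (hbasis j)
end

section
/- Let R be a principal ideal domain with a ring automorphism σ and let a ∈ R be nonzero. Then the following are equivalent: (i) for every divisor p of a, setting q = σ(a/p), the only (p,q)-invariant ideals of R are 0 and R; (ii) either R is a field, or all three of the following hold: σ^n ≠ id for every n ≥ 1; the only ideals I of R with σ(I) = I are 0 and R; and R·a + R·σ^n(a) = R for every n ≥ 1. -/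
/-- An ideal `I` of `R` is `(p,q)`-invariant if `σ⁻¹(i)·p ∈ I` and `σ(i)·q ∈ I`
for every `i ∈ I`. -/
def PQInvariant {R : Type*} [CommRing R] (σ : R ≃+* R) (p q : R) (I : Ideal R) : Prop :=
  ∀ i ∈ I, σ⁻¹ i * p ∈ I ∧ σ i * q ∈ I

set_option linter.unusedSectionVars false

section Helpers
variable {R : Type*} [CommRing R] [IsDomain R] (σ : R ≃+* R)

lemma RE.one_app (x : R) : (1 : R ≃+* R) x = x := rfl
lemma RE.mul_app (f g : R ≃+* R) (x : R) : (f * g) x = f (g x) := rfl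

lemma RE.prime_equiv (e : R ≃+* R) {x : R} (hx : Prime x) : Prime (e x) := by
  refine ⟨fun h => hx.ne_zero ?_, fun h => hx.not_unit ?_, fun b c h => ?_⟩
  · rw [← e.symm_apply_apply x, h, map_zero]
  · simpa using h.map e.symm
  · have h' : x ∣ e.symm b * e.symm c := by
      have := map_dvd e.symm h
      rw [map_mul] at this; simpa using this
    rcases hx.2.2 _ _ h' with hb | hc
    · left; have := map_dvd e hb; simpa using this
    · right; have := map_dvd e hc; simpa using this

lemma RE.pow_symm_cancel : ∀ (n : ℕ) (x : R), (σ ^ n) ((σ.symm ^ n) x) = x := by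
  intro n
  induction n with
  | zero => intro x; simp [RE.one_app]
  | succ n ih =>
    intro x
    rw [pow_succ σ n, pow_succ' σ.symm n, RE.mul_app, RE.mul_app,
      σ.apply_symm_apply, ih]

lemma RE.symm_pow_cancel : ∀ (n : ℕ) (x : R), (σ.symm ^ n) ((σ ^ n) x) = x := by
  intro n
  induction n with
  | zero => intro x; simp [RE.one_app]
  | succ n ih =>
    intro x
    rw [pow_succ σ.symm n, pow_succ' σ n, RE.mul_app, RE.mul_app,
      σ.symm_apply_apply, ih]

lemma RE.pow_add_symm (j i : ℕ) (x : R) : (σ ^ (j + i)) ((σ.symm ^ i) x) = (σ ^ j) x := by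
  rw [pow_add, RE.mul_app, RE.pow_symm_cancel]

lemma pq_span (c p q : R) (h1 : c ∣ σ.symm c * p) (h2 : c ∣ σ c * q) :
    PQInvariant σ p q (Ideal.span {c}) := by
  intro i hi
  rw [Ideal.mem_span_singleton] at hi
  obtain ⟨t, rfl⟩ := hi
  constructor <;> rw [Ideal.mem_span_singleton]
  · have he : σ⁻¹ (c * t) * p = (σ.symm c * p) * σ.symm t := by
      show σ.symm (c * t) * p = _
      rw [map_mul]; ring
    rw [he]
    exact h1.mul_right _
  · have he : σ (c * t) * q = (σ c * q) * σ t := by rw [map_mul]; ring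
    rw [he]
    exact h2.mul_right _

end Helpers
section Orbit
variable {R : Type*} [CommRing R] [IsDomain R] (σ : R ≃+* R)

open Finset

lemma orbit_not_assoc
    (hB : ∀ I : Ideal R, Ideal.map (σ : R →+* R) I = I → I = ⊥ ∨ I = ⊤)
    {π : R} (hπ : Prime π) : ∀ k : ℕ, 1 ≤ k → ¬ Associated ((σ ^ k) π) π := by
  intro k hk hass
  obtain ⟨m, rfl⟩ : ∃ m, k = m + 1 := ⟨k - 1, (Nat.succ_pred_eq_of_pos hk).symm⟩
  set c := ∏ i ∈ Finset.range (m + 1), (σ ^ i) π with hc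
  have hprime : ∀ i : ℕ, Prime ((σ ^ i) π) := fun i => RE.prime_equiv _ hπ
  have hcne : c ≠ 0 := Finset.prod_ne_zero_iff.2 fun i _ => (hprime i).ne_zero
  have hσc : σ c = (∏ i ∈ Finset.range m, (σ ^ (i + 1)) π) * (σ ^ (m + 1)) π := by
    rw [hc, map_prod]
    rw [show (fun i => σ ((σ ^ i) π)) = fun i => (σ ^ (i + 1)) π from
      funext fun i => by rw [pow_succ']; rfl]
    exact Finset.prod_range_succ _ _
  have hcπ : c = (∏ i ∈ Finset.range m, (σ ^ (i + 1)) π) * π := by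
    rw [hc, Finset.prod_range_succ']
    congr 1
  have hac : Associated (σ c) c := by
    rw [hσc, hcπ]
    exact Associated.mul_left _ hass
  have hmap : Ideal.map (σ : R →+* R) (Ideal.span {c}) = Ideal.span {c} := by
    rw [Ideal.map_span, Set.image_singleton]
    exact Ideal.span_singleton_eq_span_singleton.2 hac
  rcases hB _ hmap with h | h
  · exact hcne (Ideal.span_singleton_eq_bot.1 h)
  · have hπc : π ∣ c := ⟨∏ i ∈ Finset.range m, (σ ^ (i + 1)) π, by rw [hcπ]; ring⟩
    exact hπ.not_unit (isUnit_of_dvd_unit hπc (Ideal.span_singleton_eq_top.1 h))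

lemma orbit_eq (hB : ∀ I : Ideal R, Ideal.map (σ : R →+* R) I = I → I = ⊥ ∨ I = ⊤)
    {π : R} (hπ : Prime π) : ∀ k : ℕ, Associated ((σ ^ k) π) π → k = 0 := by
  intro k h
  by_contra hk
  exact orbit_not_assoc σ hB hπ k (Nat.one_le_iff_ne_zero.2 hk) h

end Orbit
section GoodN
variable {R : Type*} [CommRing R] [IsDomain R] [IsPrincipalIdealRing R] (σ : R ≃+* R)

lemma no_descent {α : Type*} {r : α → α → Prop} (wf : WellFounded r) (f : ℕ → α) :
    ¬ ∀ n, r (f (n + 1)) (f n) := by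
  intro h
  obtain ⟨a, ⟨n, rfl⟩, hmin⟩ := wf.has_min (Set.range f) ⟨f 0, 0, rfl⟩
  exact hmin (f (n + 1)) ⟨n + 1, rfl⟩ (h n)

variable (hB : ∀ I : Ideal R, Ideal.map (σ : R →+* R) I = I → I = ⊥ ∨ I = ⊤)
variable {π : R} (hπ : Prime π)

include hB hπ in
lemma assocA1 : ∀ m n : ℕ, Associated ((σ ^ m) π) ((σ ^ n) π) → m = n := by
  have key : ∀ m n : ℕ, n ≤ m → Associated ((σ ^ m) π) ((σ ^ n) π) → m = n := by
    intro m n hle hass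
    obtain ⟨j, rfl⟩ := Nat.exists_eq_add_of_le hle
    have h2 := hass.map (σ.symm ^ n : R ≃+* R)
    rw [pow_add, RE.mul_app, RE.symm_pow_cancel, RE.symm_pow_cancel] at h2
    have hj := orbit_eq σ hB hπ j h2
    omega
  intro m n hass
  rcases le_total n m with h | h
  · exact key m n h hass
  · exact (key n m h hass.symm).symm

include hB hπ in
lemma assocA2 : ∀ m n : ℕ, Associated ((σ.symm ^ m) π) ((σ.symm ^ n) π) → m = n := by
  have key : ∀ m n : ℕ, m ≤ n → Associated ((σ.symm ^ m) π) ((σ.symm ^ n) π) → m = n := by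
    intro m n hle hass
    obtain ⟨j, rfl⟩ := Nat.exists_eq_add_of_le hle
    have h2 := hass.map (σ ^ (m + j) : R ≃+* R)
    rw [RE.pow_symm_cancel, Nat.add_comm m j, RE.pow_add_symm] at h2
    have hj := orbit_eq σ hB hπ j h2
    omega
  intro m n hass
  rcases le_total m n with h | h
  · exact key m n h hass
  · exact (key n m h hass.symm).symm

include hB hπ in
lemma assocA3 : ∀ m n : ℕ, Associated ((σ ^ m) π) ((σ.symm ^ n) π) → m = 0 ∧ n = 0 := by
  intro m n hass
  have h2 := hass.map (σ ^ n : R ≃+* R)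
  rw [RE.pow_symm_cancel, ← RE.mul_app, ← pow_add] at h2
  have := orbit_eq σ hB hπ (n + m) h2
  omega

include hB hπ in
lemma exists_good_n {d : R} (hd0 : d ≠ 0) (hπd : π ∣ d) :
    ∃ n, 1 ≤ n ∧ ¬ (σ ^ n) π ∣ d ∧ ¬ (σ.symm ^ n) π ∣ d := by
  classical
  by_contra hcon
  push_neg at hcon
  have hcon' : ∀ n : ℕ, (σ ^ n) π ∣ d ∨ (σ.symm ^ n) π ∣ d := by
    intro n
    rcases Nat.eq_zero_or_pos n with rfl | hn
    · left; simpa [RE.one_app] using hπd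
    · by_contra h
      push_neg at h
      exact h.2 (hcon n hn h.1)
  set g : ℕ → R := fun n => if (σ ^ n) π ∣ d then (σ ^ n) π else (σ.symm ^ n) π with hg
  have hgdvd : ∀ n, g n ∣ d := by
    intro n
    by_cases h : (σ ^ n) π ∣ d
    · simp only [hg, if_pos h]; exact h
    · simp only [hg, if_neg h]
      rcases hcon' n with h' | h'
      · exact absurd h' h
      · exact h'
  have hgprime : ∀ n, Prime (g n) := by
    intro n
    by_cases h : (σ ^ n) π ∣ d
    · simp only [hg, if_pos h]; exact RE.prime_equiv _ hπ
    · simp only [hg, if_neg h]; exact RE.prime_equiv _ hπ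
  have hginj : ∀ m n, Associated (g m) (g n) → m = n := by
    intro m n hass
    by_cases h1 : (σ ^ m) π ∣ d <;> by_cases h2 : (σ ^ n) π ∣ d <;>
      simp only [hg, if_pos, if_neg, h1, h2] at hass
    · exact assocA1 σ hB hπ m n hass
    · have := assocA3 σ hB hπ m n hass; omega
    · have := assocA3 σ hB hπ n m hass.symm; omega
    · exact assocA2 σ hB hπ m n hass
  have hcop : ∀ N : ℕ, Set.Pairwise (↑(Finset.range N)) (Function.onFun IsCoprime g) := by
    intro N i _ j _ hij
    exact ((hgprime i).irreducible.coprime_iff_not_dvd).2 fun hdvd =>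
      hij (hginj i j ((hgprime i).associated_of_dvd (hgprime j) hdvd))
  have hP : ∀ N : ℕ, (∏ i ∈ Finset.range N, g i) ∣ d := fun N =>
    Finset.prod_dvd_of_coprime (hcop N) fun i _ => hgdvd i
  have hc : ∀ N : ℕ, ∃ e, d = (∏ i ∈ Finset.range N, g i) * e := fun N => hP N
  choose c hcspec using hc
  refine no_descent (wellFounded_dvdNotUnit) c fun N => ?_
  have e1 : d = (∏ i ∈ Finset.range N, g i) * c N := hcspec N
  have e2 : d = ((∏ i ∈ Finset.range N, g i) * g N) * c (N + 1) := by
    rw [← Finset.prod_range_succ]; exact hcspec (N + 1)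
  have hPne : (∏ i ∈ Finset.range N, g i) ≠ 0 := by
    intro h
    rw [h, zero_mul] at e1
    exact hd0 e1
  have hcc : c N = c (N + 1) * g N := by
    apply mul_left_cancel₀ hPne
    rw [← e1, e2]; ring
  refine ⟨fun h => hd0 ?_, g N, (hgprime N).not_unit, hcc⟩
  rw [h, mul_zero] at e2
  exact e2

end GoodN
section Main
variable {R : Type*} [CommRing R] [IsDomain R] [IsPrincipalIdealRing R] (σ : R ≃+* R)

lemma mpr_nonfield {a : R} (ha : a ≠ 0)
    (hB : ∀ I : Ideal R, Ideal.map (σ : R →+* R) I = I → I = ⊥ ∨ I = ⊤)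
    (hC : ∀ n : ℕ, 1 ≤ n → Ideal.span {a, (σ ^ n) a} = (⊤ : Ideal R)) :
    ∀ p r : R, a = p * r → ∀ I : Ideal R, PQInvariant σ p (σ r) I → I = ⊥ ∨ I = ⊤ := by
  intro p r hpr I hI
  obtain ⟨d, rfl⟩ : ∃ d, I = Ideal.span {d} := by
    haveI := IsPrincipalIdealRing.principal I
    exact Submodule.IsPrincipal.principal I
  by_cases hd0 : d = 0
  · left; rw [hd0]; simp
  by_cases hdu : IsUnit d
  · right; exact Ideal.span_singleton_eq_top.2 hdu
  exfalso
  have hdmem : d ∈ Ideal.span {d} := Ideal.mem_span_singleton.2 dvd_rfl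
  have h1 : d ∣ σ.symm d * p := Ideal.mem_span_singleton.1 (hI d hdmem).1
  have h2 : d ∣ σ d * σ r := Ideal.mem_span_singleton.1 (hI d hdmem).2
  obtain ⟨π, hπirr, hπd⟩ := WfDvdMonoid.exists_irreducible_factor hdu hd0
  have hπ : Prime π := hπirr.prime
  -- iteration chains
  have chain1 : ∀ n : ℕ, d ∣ (σ.symm ^ n) d * ∏ k ∈ Finset.range n, (σ.symm ^ k) p := by
    intro n
    induction n with
    | zero => simpa [RE.one_app] using dvd_refl d
    | succ n ih =>
      have step : (σ.symm ^ n) d ∣ (σ.symm ^ (n + 1)) d * (σ.symm ^ n) p := by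
        have h := map_dvd (σ.symm ^ n : R ≃+* R) h1
        rw [map_mul] at h
        rwa [show (σ.symm ^ n) (σ.symm d) = (σ.symm ^ (n + 1)) d from by
          rw [pow_succ]; rfl] at h
      calc d ∣ (σ.symm ^ n) d * ∏ k ∈ Finset.range n, (σ.symm ^ k) p := ih
        _ ∣ ((σ.symm ^ (n + 1)) d * (σ.symm ^ n) p) *
            ∏ k ∈ Finset.range n, (σ.symm ^ k) p := mul_dvd_mul_right step _
        _ = (σ.symm ^ (n + 1)) d * ∏ k ∈ Finset.range (n + 1), (σ.symm ^ k) p := by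
            rw [Finset.prod_range_succ]; ring
  have chain2 : ∀ n : ℕ, d ∣ (σ ^ n) d * ∏ k ∈ Finset.range n, (σ ^ (k + 1)) r := by
    intro n
    induction n with
    | zero => simpa [RE.one_app] using dvd_refl d
    | succ n ih =>
      have step : (σ ^ n) d ∣ (σ ^ (n + 1)) d * (σ ^ (n + 1)) r := by
        have h := map_dvd (σ ^ n : R ≃+* R) h2
        rw [map_mul] at h
        rwa [show (σ ^ n) (σ d) = (σ ^ (n + 1)) d from by rw [pow_succ]; rfl,
          show (σ ^ n) (σ r) = (σ ^ (n + 1)) r from by rw [pow_succ]; rfl] at h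
      calc d ∣ (σ ^ n) d * ∏ k ∈ Finset.range n, (σ ^ (k + 1)) r := ih
        _ ∣ ((σ ^ (n + 1)) d * (σ ^ (n + 1)) r) *
            ∏ k ∈ Finset.range n, (σ ^ (k + 1)) r := mul_dvd_mul_right step _
        _ = (σ ^ (n + 1)) d * ∏ k ∈ Finset.range (n + 1), (σ ^ (k + 1)) r := by
            rw [Finset.prod_range_succ]; ring
  obtain ⟨n, hn1, hnd1, hnd2⟩ := exists_good_n σ hB hπ hd0 hπd
  -- from chain1 : find j with (σ^j) π ∣ p
  obtain ⟨j, hjn, hjp⟩ : ∃ j, j ∈ Finset.range n ∧ (σ ^ j) π ∣ p := by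
    have hd : π ∣ (σ.symm ^ n) d * ∏ k ∈ Finset.range n, (σ.symm ^ k) p :=
      hπd.trans (chain1 n)
    rcases hπ.2.2 _ _ hd with h | h
    · exfalso
      apply hnd1
      have := map_dvd (σ ^ n : R ≃+* R) h
      rwa [RE.pow_symm_cancel] at this
    · obtain ⟨k, hk, hdvd⟩ := hπ.exists_mem_finset_dvd h
      refine ⟨k, hk, ?_⟩
      have := map_dvd (σ ^ k : R ≃+* R) hdvd
      rwa [RE.pow_symm_cancel] at this
  obtain ⟨i, hi1, hin, hir⟩ : ∃ i, 1 ≤ i ∧ i ≤ n ∧ (σ.symm ^ i) π ∣ r := by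
    have hd : π ∣ (σ ^ n) d * ∏ k ∈ Finset.range n, (σ ^ (k + 1)) r :=
      hπd.trans (chain2 n)
    rcases hπ.2.2 _ _ hd with h | h
    · exfalso
      apply hnd2
      have := map_dvd (σ.symm ^ n : R ≃+* R) h
      rwa [RE.symm_pow_cancel] at this
    · obtain ⟨k, hk, hdvd⟩ := hπ.exists_mem_finset_dvd h
      refine ⟨k + 1, Nat.le_add_left 1 k, Finset.mem_range.1 hk, ?_⟩
      have := map_dvd (σ.symm ^ (k + 1) : R ≃+* R) hdvd
      rwa [RE.symm_pow_cancel] at this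
  set m := j + i with hm
  have hta : (σ ^ j) π ∣ a := by
    rw [hpr]; exact hjp.mul_right r
  have htσa : (σ ^ j) π ∣ (σ ^ m) a := by
    have hra : (σ.symm ^ i) π ∣ a := by
      rw [hpr]; exact hir.mul_left p
    have := map_dvd (σ ^ m : R ≃+* R) hra
    rwa [hm, RE.pow_add_symm] at this
  have hle : Ideal.span {a, (σ ^ m) a} ≤ Ideal.span {(σ ^ j) π} := by
    rw [Ideal.span_le]
    rintro x hx
    rcases hx with rfl | hx
    · exact Ideal.mem_span_singleton.2 hta
    · rw [Set.mem_singleton_iff] at hx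
      subst hx
      exact Ideal.mem_span_singleton.2 htσa
  rw [hC m (by omega)] at hle
  have hunit : IsUnit ((σ ^ j) π) :=
    Ideal.span_singleton_eq_top.1 (top_le_iff.1 hle)
  apply hπ.not_isUnit
  have := hunit.map ((σ.symm ^ j : R ≃+* R) : R →* R)
  rw [← RE.symm_pow_cancel σ j π]
  exact this

end Main
section MP
variable {R : Type*} [CommRing R] [IsDomain R] [IsPrincipalIdealRing R] (σ : R ≃+* R)

lemma mp_dir {a : R} (ha : a ≠ 0)
    (h : ∀ p r : R, a = p * r → ∀ I : Ideal R, PQInvariant σ p (σ r) I → I = ⊥ ∨ I = ⊤)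
    (hf : ¬ IsField R) :
    (∀ n : ℕ, 1 ≤ n → σ ^ n ≠ 1) ∧
      (∀ I : Ideal R, Ideal.map (σ : R →+* R) I = I → I = ⊥ ∨ I = ⊤) ∧
      (∀ n : ℕ, 1 ≤ n → Ideal.span {a, (σ ^ n) a} = (⊤ : Ideal R)) := by
  have key : ∀ d : R, Associated (σ d) d → d = 0 ∨ IsUnit d := by
    intro d hass
    have hpq : PQInvariant σ a (σ 1) (Ideal.span {d}) := by
      apply pq_span
      · have h2 := hass.map (σ.symm : R ≃+* R)
        rw [σ.symm_apply_apply] at h2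
        exact h2.dvd.mul_right _
      · rw [map_one, mul_one]
        exact hass.symm.dvd
    rcases h a 1 (mul_one a).symm _ hpq with h' | h'
    · exact Or.inl (Ideal.span_singleton_eq_bot.1 h')
    · exact Or.inr (Ideal.span_singleton_eq_top.1 h')
  have hB : ∀ I : Ideal R, Ideal.map (σ : R →+* R) I = I → I = ⊥ ∨ I = ⊤ := by
    intro I hmap
    obtain ⟨d, rfl⟩ : ∃ d, I = Ideal.span {d} := by
      haveI := IsPrincipalIdealRing.principal I
      exact Submodule.IsPrincipal.principal I
    rw [Ideal.map_span, Set.image_singleton] at hmap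
    have hass : Associated (σ d) d := Ideal.span_singleton_eq_span_singleton.1 hmap
    rcases key d hass with h' | h'
    · exact Or.inl (by rw [h']; simp)
    · exact Or.inr (Ideal.span_singleton_eq_top.2 h')
  refine ⟨?_, hB, ?_⟩
  · -- σ^n ≠ 1
    intro n hn h1n
    obtain ⟨I, hbot, htop⟩ := Ring.not_isField_iff_exists_ideal_bot_lt_and_lt_top.1 hf
    obtain ⟨d, rfl⟩ : ∃ d, I = Ideal.span {d} := by
      haveI := IsPrincipalIdealRing.principal I
      exact Submodule.IsPrincipal.principal I
    have hd0 : d ≠ 0 := by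
      intro hq
      subst hq
      rw [show Ideal.span {(0 : R)} = ⊥ from Ideal.span_singleton_eq_bot.2 rfl] at hbot
      exact lt_irrefl _ hbot
    have hdu : ¬ IsUnit d := fun hu => htop.ne (Ideal.span_singleton_eq_top.2 hu)
    obtain ⟨π, hπirr, hπd⟩ := WfDvdMonoid.exists_irreducible_factor hdu hd0
    have hπ : Prime π := hπirr.prime
    obtain ⟨m, rfl⟩ : ∃ m, n = m + 1 := ⟨n - 1, (Nat.succ_pred_eq_of_pos hn).symm⟩
    set c := ∏ i ∈ Finset.range (m + 1), (σ ^ i) π with hc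
    have hσc : σ c = c := by
      rw [hc, map_prod]
      calc ∏ i ∈ Finset.range (m + 1), σ ((σ ^ i) π)
          = ∏ i ∈ Finset.range (m + 1), (σ ^ (i + 1)) π :=
            Finset.prod_congr rfl fun i _ => by rw [pow_succ']; rfl
        _ = (∏ i ∈ Finset.range m, (σ ^ (i + 1)) π) * (σ ^ (m + 1)) π :=
            Finset.prod_range_succ _ _
        _ = (∏ i ∈ Finset.range m, (σ ^ (i + 1)) π) * (σ ^ 0) π := by rw [h1n, pow_zero]
        _ = ∏ i ∈ Finset.range (m + 1), (σ ^ i) π :=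
            (Finset.prod_range_succ' (fun k => (σ ^ k) π) m).symm
    have hπc : π ∣ c := by
      have h0 : (σ ^ 0) π ∣ c :=
        Finset.dvd_prod_of_mem _ (Finset.mem_range.2 (Nat.succ_pos m))
      simpa [RE.one_app] using h0
    rcases key c (by rw [hσc]) with h' | h'
    · exact Finset.prod_ne_zero_iff.2
        (fun i _ => (RE.prime_equiv (σ ^ i : R ≃+* R) hπ).ne_zero) h'
    · exact hπ.not_unit (isUnit_of_dvd_unit hπc h')
  · -- coprimality
    intro n hn
    by_contra hne
    obtain ⟨b, hb⟩ : ∃ b, Ideal.span {a, (σ ^ n) a} = Ideal.span {b} := by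
      haveI := IsPrincipalIdealRing.principal (Ideal.span {a, (σ ^ n) a})
      exact Submodule.IsPrincipal.principal _
    have hba : b ∣ a := by
      rw [← Ideal.mem_span_singleton, ← hb]
      exact Ideal.subset_span (by simp)
    have hbσ : b ∣ (σ ^ n) a := by
      rw [← Ideal.mem_span_singleton, ← hb]
      exact Ideal.subset_span (by simp)
    have hb0 : b ≠ 0 := fun hq => ha (zero_dvd_iff.1 (hq ▸ hba))
    have hbu : ¬ IsUnit b := fun hu => hne (hb.trans (Ideal.span_singleton_eq_top.2 hu))
    obtain ⟨π, hπirr, hπb⟩ := WfDvdMonoid.exists_irreducible_factor hbu hb0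
    have hπ : Prime π := hπirr.prime
    have hπ' : Prime ((σ.symm ^ n) π) := RE.prime_equiv _ hπ
    have hnass : ¬ Associated ((σ.symm ^ n) π) π := by
      intro hass
      have h2 := hass.map (σ ^ n : R ≃+* R)
      rw [RE.pow_symm_cancel] at h2
      exact orbit_not_assoc σ hB hπ n hn h2.symm
    have hcop : IsCoprime π ((σ.symm ^ n) π) :=
      (hπ'.irreducible.coprime_iff_not_dvd.2 fun hdvd =>
        hnass (hπ'.associated_of_dvd hπ hdvd)).symm
    have hd1 : π ∣ a := hπb.trans hba
    have hd2 : (σ.symm ^ n) π ∣ a := by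
      have := map_dvd (σ.symm ^ n : R ≃+* R) (hπb.trans hbσ)
      rwa [RE.symm_pow_cancel] at this
    obtain ⟨w, hw⟩ := hcop.mul_dvd hd1 hd2
    have hprod : a = π * ((σ.symm ^ n) π * w) := by rw [hw]; ring
    obtain ⟨m, rfl⟩ : ∃ m, n = m + 1 := ⟨n - 1, (Nat.succ_pred_eq_of_pos hn).symm⟩
    set c := ∏ i ∈ Finset.range (m + 1), (σ.symm ^ i) π with hc
    have hπc : π ∣ c := by
      have h0 : (σ.symm ^ 0) π ∣ c :=
        Finset.dvd_prod_of_mem _ (Finset.mem_range.2 (Nat.succ_pos m))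
      simpa [RE.one_app] using h0
    have hc0 : c ≠ 0 := Finset.prod_ne_zero_iff.2
      (fun i _ => (RE.prime_equiv (σ.symm ^ i : R ≃+* R) hπ).ne_zero)
    have hcu : ¬ IsUnit c := fun hu => hπ.not_unit (isUnit_of_dvd_unit hπc hu)
    have inv1 : c ∣ σ.symm c * π := by
      have e1 : σ.symm c = ∏ i ∈ Finset.range (m + 1), (σ.symm ^ (i + 1)) π := by
        rw [hc, map_prod]
        exact Finset.prod_congr rfl fun i _ => by rw [pow_succ']; rfl
      have e2 : σ.symm c * π = c * (σ.symm ^ (m + 1)) π := by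
        rw [e1, Finset.prod_range_succ, hc, Finset.prod_range_succ', pow_zero,
          RE.one_app]
        ring
      rw [e2]
      exact dvd_mul_right _ _
    have inv2 : c ∣ σ c * σ ((σ.symm ^ (m + 1)) π * w) := by
      have e1 : σ c = (∏ i ∈ Finset.range m, (σ.symm ^ i) π) * σ π := by
        rw [hc, map_prod, Finset.prod_range_succ', pow_zero, RE.one_app]
        congr 1
        exact Finset.prod_congr rfl fun i _ => by
          rw [pow_succ']
          exact σ.apply_symm_apply _
      have e2 : σ ((σ.symm ^ (m + 1)) π * w) = (σ.symm ^ m) π * σ w := by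
        rw [map_mul]
        congr 1
        rw [pow_succ']
        exact σ.apply_symm_apply _
      have e3 : σ c * σ ((σ.symm ^ (m + 1)) π * w) = c * (σ π * σ w) := by
        rw [e1, e2, hc, Finset.prod_range_succ]
        ring
      rw [e3]
      exact dvd_mul_right _ _
    rcases h π ((σ.symm ^ (m + 1)) π * w) hprod _
        (pq_span σ c π (σ ((σ.symm ^ (m + 1)) π * w)) inv1 inv2) with h' | h'
    · exact hc0 (Ideal.span_singleton_eq_bot.1 h')
    · exact hcu (Ideal.span_singleton_eq_top.1 h')

end MP

/-- Over a PID `R` with automorphism `σ` and `0 ≠ a ∈ R`, every rank-one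
`R`-free module `V_p` (for `p ∣ a`, `q = σ(a/p)`) is simple iff either `R` is a field or
Bavula's simplicity criterion for the GWA `R(σ,a)` holds. -/
theorem stmt_1 {R : Type*} [CommRing R] [IsDomain R] [IsPrincipalIdealRing R]
    (σ : R ≃+* R) (a : R) (ha : a ≠ 0) :
    (∀ p r : R, a = p * r → ∀ I : Ideal R, PQInvariant σ p (σ r) I → I = ⊥ ∨ I = ⊤) ↔
      (IsField R ∨
        ((∀ n : ℕ, 1 ≤ n → σ ^ n ≠ 1) ∧
          (∀ I : Ideal R, Ideal.map (σ : R →+* R) I = I → I = ⊥ ∨ I = ⊤) ∧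
          (∀ n : ℕ, 1 ≤ n → Ideal.span {a, (σ ^ n) a} = (⊤ : Ideal R)))) := by
  constructor
  · intro h
    by_cases hf : IsField R
    · exact Or.inl hf
    · exact Or.inr (mp_dir σ ha h hf)
  · rintro (hf | ⟨hA, hB, hC⟩)
    · intro p r hpr I hI
      by_cases hb : I = ⊥
      · exact Or.inl hb
      · right
        obtain ⟨x, hxI, hx0⟩ := Submodule.exists_mem_ne_zero_of_ne_bot hb
        obtain ⟨y, hy⟩ := hf.mul_inv_cancel hx0
        exact Ideal.eq_top_of_isUnit_mem I hxI (IsUnit.of_mul_eq_one y hy)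
    · exact mpr_nonfield σ ha hB hC
end

section
/- Let R be a principal ideal domain with a ring automorphism σ such that for every irreducible z ∈ R and every n ≥ 1, σ^n(z) is not an associate of z. Let p, q ∈ R be nonzero, and let N be the cardinality (counted with multiplicity) of the multiset of pairs (z, w), where z runs over the multiset of irreducible factors of q and w runs over the multiset of irreducible factors of p, such that w is an associate of σ^n(z) for some n ≥ 0. Then every strictly increasing chain I₀ ⊊ I₁ ⊊ ⋯ ⊊ I_m of (p,q)-invariant ideals of R satisfies m ≤ 1 + N. -/
namespace StmtTwo
set_option linter.unusedSectionVars false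
open UniqueFactorizationMonoid
open scoped Classical

variable {R : Type*} [CommRing R] [IsDomain R] [IsPrincipalIdealRing R]

local instance : IsTrans R Associated := ⟨fun _ _ _ => Associated.trans⟩
local instance : Std.Symm (Associated : R → R → Prop) := ⟨fun _ _ => Associated.symm⟩

/-! ### valuation basics -/

noncomputable def vv (z x : R) : ℕ := (factors x).countP (Associated z ·)

theorem vv_congr {z z' : R} (h : Associated z z') (x : R) : vv z x = vv z' x := by
  unfold vv
  apply Multiset.countP_congr rfl
  intro a _
  exact propext ⟨fun ha => h.symm.trans ha, fun ha => h.trans ha⟩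

theorem vv_eq_of_rel {z : R} {s t : Multiset R} (h : Multiset.Rel Associated s t) :
    s.countP (Associated z ·) = t.countP (Associated z ·) :=
  Multiset.Rel.countP_eq Associated z h

theorem vv_mul {x y : R} (hx : x ≠ 0) (hy : y ≠ 0) (z : R) :
    vv z (x * y) = vv z x + vv z y := by
  unfold vv
  rw [← Multiset.countP_add]
  apply vv_eq_of_rel
  apply factors_unique irreducible_of_factor
  · intro w hw
    rcases Multiset.mem_add.mp hw with h | h
    · exact irreducible_of_factor _ h
    · exact irreducible_of_factor _ h
  · rw [Multiset.prod_add]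
    exact (factors_prod (mul_ne_zero hx hy)).trans
      ((factors_prod hx).mul_mul (factors_prod hy)).symm

theorem vv_le_of_dvd {x y : R} (hy : y ≠ 0) (h : x ∣ y) (z : R) : vv z x ≤ vv z y := by
  obtain ⟨c, rfl⟩ := h
  have hx : x ≠ 0 := fun h0 => hy (by simp [h0])
  have hc : c ≠ 0 := fun h0 => hy (by simp [h0])
  rw [vv_mul hx hc]
  exact Nat.le_add_right _ _

theorem vv_pos_of_dvd {z x : R} (hz : Irreducible z) (hx : x ≠ 0) (h : z ∣ x) :
    1 ≤ vv z x := by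
  obtain ⟨u, hu, hassoc⟩ := exists_mem_factors_of_dvd hx hz h
  show 0 < (factors x).countP (Associated z ·)
  rw [Multiset.countP_pos]
  exact ⟨u, hu, hassoc⟩

theorem dvd_of_vv_pos {z x : R} (h : 1 ≤ vv z x) : z ∣ x := by
  replace h : 0 < (factors x).countP (Associated z ·) := h
  rw [Multiset.countP_pos] at h
  obtain ⟨u, hu, hassoc⟩ := h
  exact hassoc.dvd.trans (dvd_of_mem_factors hu)

theorem vv_map (τ : R ≃+* R) {x : R} (hx : x ≠ 0) (z : R) :
    vv z (τ x) = vv (τ.symm z) x := by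
  unfold vv
  have hrel : Multiset.Rel Associated (factors (τ x)) ((factors x).map τ) := by
    apply factors_unique irreducible_of_factor
    · intro w hw
      obtain ⟨u, hu, rfl⟩ := Multiset.mem_map.mp hw
      exact (irreducible_of_factor _ hu).map τ
    · have h1 : ((factors x).map τ).prod = τ (factors x).prod := by
        rw [← map_multiset_prod]
      rw [h1]
      have h2 : Associated (τ (factors x).prod) (τ x) := (factors_prod hx).map τ.toMonoidHom
      exact (factors_prod (fun h0 => hx (by simpa using congrArg τ.symm h0))).trans h2.symm
  rw [vv_eq_of_rel hrel, Multiset.countP_map, ← Multiset.countP_eq_card_filter]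
  apply Multiset.countP_congr rfl
  intro a _
  apply propext
  constructor
  · intro h
    have := h.map τ.symm.toMonoidHom
    simpa using this
  · intro h
    have := h.map τ.toMonoidHom
    simpa using this

/-! ### automorphism powers -/

theorem zpow_apply_add (σ : R ≃+* R) (a b : ℤ) (x : R) :
    (σ ^ (a + b) : R ≃+* R) x = (σ ^ a : R ≃+* R) ((σ ^ b : R ≃+* R) x) := by
  rw [zpow_add]; rfl

theorem pow_natCast_apply (σ : R ≃+* R) (n : ℕ) (x : R) :
    (σ ^ (n : ℤ) : R ≃+* R) x = (σ ^ n : R ≃+* R) x := by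
  rw [zpow_natCast]

theorem zpow_zpow_apply (σ : R ≃+* R) (a b : ℤ) (x : R) :
    (σ ^ a : R ≃+* R) ((σ ^ b : R ≃+* R) x) = (σ ^ (a + b) : R ≃+* R) x :=
  (zpow_apply_add σ a b x).symm

theorem zpow_exp_congr (σ : R ≃+* R) {a b : ℤ} (h : a = b) (x : R) :
    (σ ^ a : R ≃+* R) x = (σ ^ b : R ≃+* R) x := by rw [h]

theorem irreducible_zpow {σ : R ≃+* R} {z : R} (hz : Irreducible z) (a : ℤ) :
    Irreducible ((σ ^ a : R ≃+* R) z) := hz.map (σ ^ a : R ≃+* R)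

theorem orb_ne (σ : R ≃+* R)
    (horb : ∀ z : R, Irreducible z → ∀ m : ℕ, 1 ≤ m → ¬ Associated ((σ ^ m) z) z)
    {z : R} (hz : Irreducible z) {a b : ℤ} (hab : a ≠ b) :
    ¬ Associated ((σ ^ a : R ≃+* R) z) ((σ ^ b : R ≃+* R) z) := by
  suffices H : ∀ a b : ℤ, a < b → ¬ Associated ((σ ^ a : R ≃+* R) z) ((σ ^ b : R ≃+* R) z) by
    rcases lt_or_gt_of_ne hab with h | h
    · exact H a b h
    · intro hassoc; exact H b a h hassoc.symm
  intro a b h hassoc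
  have h2 : Associated ((σ ^ (-a) : R ≃+* R) ((σ ^ a : R ≃+* R) z))
      ((σ ^ (-a) : R ≃+* R) ((σ ^ b : R ≃+* R) z)) :=
    hassoc.map (σ ^ (-a) : R ≃+* R).toMonoidHom
  rw [← zpow_apply_add, ← zpow_apply_add, neg_add_cancel] at h2
  have hz0 : (σ ^ (0:ℤ) : R ≃+* R) z = z := by rw [zpow_zero]; rfl
  rw [hz0] at h2
  set m : ℕ := (-a + b).toNat with hm
  have hmpos : 1 ≤ m := by omega
  have hcast : ((m : ℤ)) = -a + b := by omega
  apply horb z hz m hmpos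
  have : (σ ^ (m : ℤ) : R ≃+* R) z = (σ ^ m : R ≃+* R) z := pow_natCast_apply σ m z
  rw [← this, hcast]
  exact h2.symm

theorem not_forall_orbit_dvd (σ : R ≃+* R)
    (horb : ∀ z : R, Irreducible z → ∀ m : ℕ, 1 ≤ m → ¬ Associated ((σ ^ m) z) z)
    {z₀ g : R} (hz₀ : Irreducible z₀) (hg : g ≠ 0) (f : ℕ → ℤ) (hf : Function.Injective f) :
    ¬ ∀ k : ℕ, ((σ ^ (f k) : R ≃+* R) z₀) ∣ g := by
  intro H
  have he : ∀ k : ℕ, ∃ u, u ∈ factors g ∧ Associated ((σ ^ (f k) : R ≃+* R) z₀) u :=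
    fun k => exists_mem_factors_of_dvd hg (irreducible_zpow hz₀ (f k)) (H k)
  choose e he1 he2 using he
  set c := (factors g).toFinset.card with hc
  have : (Finset.range (c + 1)).card ≤ (factors g).toFinset.card := by
    apply Finset.card_le_card_of_injOn e
    · intro k _; exact Multiset.mem_toFinset.mpr (he1 k)
    · intro k _ k' _ hkk'
      by_contra hne
      have hassoc : Associated ((σ ^ (f k) : R ≃+* R) z₀) ((σ ^ (f k') : R ≃+* R) z₀) :=
        (he2 k).trans (hkk' ▸ (he2 k').symm)
      exact orb_ne σ horb hz₀ (fun h => hne (hf h)) hassoc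
  simp only [Finset.card_range] at this
  omega

theorem invariance_ineq (σ : R ≃+* R) {p q g : R} (hp : p ≠ 0) (hq : q ≠ 0) (hg : g ≠ 0)
    (hinv : PQInvariant σ p q (Ideal.span {g})) (z : R) :
    vv z g ≤ vv ((σ ^ (1:ℤ) : R ≃+* R) z) g + vv z p ∧
    vv z g ≤ vv ((σ ^ (-1:ℤ) : R ≃+* R) z) g + vv z q := by
  have hgmem : g ∈ Ideal.span {g} := Ideal.mem_span_singleton_self g
  obtain ⟨h1, h2⟩ := hinv g hgmem
  have hσg : σ g ≠ 0 := fun h0 => hg (by simpa using congrArg σ.symm h0)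
  have hσig : σ.symm g ≠ 0 := fun h0 => hg (by simpa using congrArg σ h0)
  have h1' : σ.symm g * p ∈ Ideal.span {g} := h1
  constructor
  · have hdvd : g ∣ σ.symm g * p := Ideal.mem_span_singleton.mp h1'
    have hle : vv z g ≤ vv z (σ.symm g * p) :=
      vv_le_of_dvd (mul_ne_zero hσig hp) hdvd z
    have hsplit : vv z (σ.symm g * p) = vv (σ z) g + vv z p := by
      have h5 : vv z (σ.symm g) = vv (σ z) g := by
        have := vv_map (σ.symm) (x := g) hg z
        simpa using this
      rw [vv_mul hσig hp, h5]
    rw [hsplit] at hle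
    simpa [zpow_one] using hle
  · have hdvd : g ∣ σ g * q := Ideal.mem_span_singleton.mp h2
    have hle : vv z g ≤ vv z (σ g * q) := vv_le_of_dvd (mul_ne_zero hσg hq) hdvd z
    have hsplit : vv z (σ g * q) = vv (σ.symm z) g + vv z q := by
      rw [vv_mul hσg hq, vv_map σ hg]
    rw [hsplit] at hle
    have hpow : (σ ^ (-1:ℤ) : R ≃+* R) z = σ.symm z := by
      rw [zpow_neg_one]; rfl
    rw [hpow]
    exact hle

/-! ### canonical representatives and counting -/

noncomputable def rep (x : R) : R := Quotient.out (Associates.mk x)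

theorem rep_assoc (x : R) : Associated x (rep x) := by
  rw [← Associates.mk_eq_mk_iff_associated]
  exact (Quotient.out_eq (Associates.mk x)).symm

theorem rep_eq_iff {x y : R} : rep x = rep y ↔ Associated x y := by
  constructor
  · intro h
    exact (rep_assoc x).trans (h ▸ (rep_assoc y).symm)
  · intro h
    unfold rep
    rw [Associates.mk_eq_mk_iff_associated.mpr h]

theorem count_map_rep (z x : R) :
    ((factors x).map rep).count (rep z) = vv z x := by
  rw [Multiset.count_map]
  unfold vv
  rw [Multiset.countP_eq_card_filter]
  congr 1
  apply Multiset.filter_congr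
  intro a _
  exact rep_eq_iff

theorem map_sprod {α β γ δ : Type*} (f : α → γ) (g : β → δ)
    (s : Multiset α) (t : Multiset β) :
    (s ×ˢ t).map (Prod.map f g) = (s.map f) ×ˢ (t.map g) := by
  induction s using Multiset.induction_on with
  | empty => simp
  | cons a s ih =>
    simp only [Multiset.cons_product, Multiset.map_add, Multiset.map_cons, ih,
      Multiset.map_map]
    congr 1

theorem count_sprod {α β : Type*} [DecidableEq α] [DecidableEq β]
    (s : Multiset α) (t : Multiset β) (x : α) (y : β) :
    (s ×ˢ t).count (x, y) = s.count x * t.count y := by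
  induction s using Multiset.induction_on with
  | empty => simp
  | cons a s ih =>
    rw [Multiset.cons_product, Multiset.count_add, ih]
    by_cases hax : x = a
    · subst hax
      have hinj : Function.Injective (Prod.mk x : β → α × β) := by
        intro b c h; simpa using congrArg Prod.snd h
      have h1 : (t.map (Prod.mk x)).count (x, y) = t.count y :=
        Multiset.count_map_eq_count' (Prod.mk x) t hinj y
      rw [h1, Multiset.count_cons_self]
      ring
    · have h0 : (x, y) ∉ t.map (Prod.mk a) := by
        intro hmem
        obtain ⟨b, _, hb⟩ := Multiset.mem_map.mp hmem
        exact hax (congrArg Prod.fst hb).symm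
      rw [Multiset.count_eq_zero.mpr h0, Multiset.count_cons_of_ne hax]
      ring

theorem toFinset_sprod {α β : Type*} [DecidableEq α] [DecidableEq β]
    (s : Multiset α) (t : Multiset β) :
    (s ×ˢ t).toFinset = s.toFinset ×ˢ t.toFinset := by
  ext ⟨a, b⟩
  simp only [Multiset.mem_toFinset, Finset.mem_product]
  exact Multiset.mem_product

theorem card_filter_eq_sum {α : Type*} [DecidableEq α] (P : α → Prop) [DecidablePred P]
    (M : Multiset α) :
    Multiset.card (M.filter P) = ∑ u ∈ M.toFinset, if P u then M.count u else 0 := by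
  rw [← Multiset.toFinset_sum_count_eq]
  rw [Finset.sum_subset (Multiset.toFinset_subset.mpr (Multiset.filter_subset P M))]
  · apply Finset.sum_congr rfl
    intro u _
    rw [Multiset.count_filter]
  · intro u _ hu
    rw [Multiset.count_eq_zero]
    intro hmem
    exact hu (Multiset.mem_toFinset.mpr hmem)

/-! ### the potential function -/

section Potential

variable (σ : R ≃+* R) (p q : R)

noncomputable def pyrCond (g x y : R) (α β : ℕ) : Prop :=
  ∃ n : ℕ, Associated ((σ ^ n) x) y ∧ ∀ k ≤ n,
    min (α + ∑ t ∈ Finset.Icc 1 k, vv ((σ ^ t) x) q)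
        (β + ∑ t ∈ Finset.Ico k n, vv ((σ ^ t) x) p) ≤ vv ((σ ^ k) x) g

noncomputable def numP (g x y : R) : ℕ :=
  (((Finset.Icc 1 (vv x q)) ×ˢ (Finset.Icc 1 (vv y p))).filter
    (fun ab => pyrCond σ p q g x y ab.1 ab.2)).card

noncomputable def Phi (g : R) : ℕ :=
  ∑ xy ∈ (((factors q).map rep).toFinset ×ˢ ((factors p).map rep).toFinset),
    numP σ p q g xy.1 xy.2

theorem count_map_rep' {x m : R} (hx : x ∈ ((factors m).map rep).toFinset) :
    ((factors m).map rep).count x = vv x m := by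
  obtain ⟨w, hw, rfl⟩ := Multiset.mem_map.mp (Multiset.mem_toFinset.mp hx)
  rw [count_map_rep, vv_congr (rep_assoc w)]

theorem N_eq :
    Multiset.card ((factors q ×ˢ factors p).filter
      (fun zw => ∃ n : ℕ, Associated ((σ ^ n) zw.1) zw.2)) =
    ∑ xy ∈ (((factors q).map rep).toFinset ×ˢ ((factors p).map rep).toFinset),
      (if ∃ n : ℕ, Associated ((σ ^ n) xy.1) xy.2 then vv xy.1 q * vv xy.2 p else 0) := by
  set P : R × R → Prop := fun zw => ∃ n : ℕ, Associated ((σ ^ n) zw.1) zw.2 with hP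
  have hmap : ∀ zw : R × R, P (Prod.map rep rep zw) ↔ P zw := by
    rintro ⟨a, b⟩
    constructor
    · rintro ⟨n, hn⟩
      exact ⟨n, (((rep_assoc a).map ((σ^n : R ≃+* R) : R →* R)).trans hn).trans
        (rep_assoc b).symm⟩
    · rintro ⟨n, hn⟩
      exact ⟨n, (((rep_assoc a).map ((σ^n : R ≃+* R) : R →* R)).symm.trans hn).trans
        (rep_assoc b)⟩
  have step1 : Multiset.card ((factors q ×ˢ factors p).filter P)
      = Multiset.card (((((factors q).map rep) ×ˢ ((factors p).map rep))).filter P) := by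
    rw [← Multiset.countP_eq_card_filter, ← Multiset.countP_eq_card_filter]
    rw [← map_sprod rep rep, Multiset.countP_map, ← Multiset.countP_eq_card_filter]
    apply Multiset.countP_congr rfl
    intro zw _
    exact propext (hmap zw).symm
  rw [step1, card_filter_eq_sum, toFinset_sprod]
  apply Finset.sum_congr rfl
  rintro ⟨x, y⟩ hxy
  rw [Finset.mem_product] at hxy
  rw [count_sprod, count_map_rep' hxy.1, count_map_rep' hxy.2]

theorem Phi_le_N (g : R) :
    Phi σ p q g ≤ Multiset.card ((factors q ×ˢ factors p).filter
      (fun zw => ∃ n : ℕ, Associated ((σ ^ n) zw.1) zw.2)) := by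
  rw [N_eq]
  apply Finset.sum_le_sum
  rintro ⟨x, y⟩ _
  by_cases hc : ∃ n : ℕ, Associated ((σ ^ n) x) y
  · rw [if_pos hc]
    calc numP σ p q g x y ≤ ((Finset.Icc 1 (vv x q)) ×ˢ (Finset.Icc 1 (vv y p))).card :=
          Finset.card_filter_le _ _
    _ = vv x q * vv y p := by rw [Finset.card_product]; simp
  · rw [if_neg hc]
    unfold numP
    rw [Finset.card_eq_zero.mpr]
    rw [Finset.filter_eq_empty_iff]
    rintro ab _ ⟨n, hn, -⟩
    exact hc ⟨n, hn⟩

theorem Phi_mono {g g' : R} (hg : g ≠ 0) (hdvd : g' ∣ g) :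
    Phi σ p q g' ≤ Phi σ p q g := by
  apply Finset.sum_le_sum
  rintro ⟨x, y⟩ _
  apply Finset.card_le_card
  apply Finset.monotone_filter_right
  rintro ⟨α, β⟩ _ ⟨n, hn, hcond⟩
  exact ⟨n, hn, fun k hk => (hcond k hk).trans (vv_le_of_dvd hg hdvd _)⟩

end Potential

/-! ### strict decrease -/

noncomputable def Af (σ : R ≃+* R) (w z₀ : R) (t : ℤ) : ℕ := vv ((σ ^ t : R ≃+* R) z₀) w

noncomputable def Qsum (σ : R ≃+* R) (q z₀ : R) (d : ℕ) : ℕ :=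
  ∑ t ∈ Finset.range d, Af σ q z₀ (-(t : ℤ))

noncomputable def Psum (σ : R ≃+* R) (p z₀ : R) (d : ℕ) : ℕ :=
  ∑ t ∈ Finset.range d, Af σ p z₀ (t : ℤ)

theorem Phi_strict (σ : R ≃+* R)
    (horb : ∀ z : R, Irreducible z → ∀ m : ℕ, 1 ≤ m → ¬ Associated ((σ ^ m) z) z)
    {p q g g' : R} (hp : p ≠ 0) (hq : q ≠ 0) (hg : g ≠ 0) (hg' : g' ≠ 0)
    (hdvd : g' ∣ g) (hndvd : ¬ g ∣ g')
    (hinv : PQInvariant σ p q (Ideal.span {g})) :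
    Phi σ p q g' < Phi σ p q g := by
  classical
  obtain ⟨c, rfl⟩ := hdvd
  have hc0 : c ≠ 0 := fun h0 => hg (by rw [h0, mul_zero])
  have hcu : ¬ IsUnit c := by
    intro hu
    obtain ⟨u, rfl⟩ := hu
    exact hndvd ⟨(u⁻¹ : Rˣ), by simp [mul_assoc]⟩
  obtain ⟨z₀, hz₀mem⟩ := exists_mem_factors hc0 hcu
  have hz₀irr : Irreducible z₀ := irreducible_of_factor z₀ hz₀mem
  have hz₀c : 1 ≤ vv z₀ c :=
    vv_pos_of_dvd hz₀irr hc0 (dvd_of_mem_factors hz₀mem)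
  have hlt : vv z₀ g' < vv z₀ (g' * c) := by
    rw [vv_mul hg' hc0]; omega
  set ℓ : ℕ := vv z₀ (g' * c) with hℓ
  have hℓ1 : 1 ≤ ℓ := by omega
  -- basic inequalities
  have hineq1 : ∀ t : ℤ, Af σ (g' * c) z₀ t ≤ Af σ (g' * c) z₀ (t + 1) + Af σ p z₀ t := by
    intro t
    have h := (invariance_ineq σ hp hq hg hinv ((σ ^ t : R ≃+* R) z₀)).1
    have e : (σ ^ (1:ℤ) : R ≃+* R) ((σ ^ t : R ≃+* R) z₀)
        = (σ ^ (t + 1 : ℤ) : R ≃+* R) z₀ := by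
      rw [zpow_zpow_apply]; exact zpow_exp_congr σ (by ring) z₀
    rw [e] at h
    exact h
  have hineq2 : ∀ t : ℤ, Af σ (g' * c) z₀ t ≤ Af σ (g' * c) z₀ (t - 1) + Af σ q z₀ t := by
    intro t
    have h := (invariance_ineq σ hp hq hg hinv ((σ ^ t : R ≃+* R) z₀)).2
    have e : (σ ^ (-1:ℤ) : R ≃+* R) ((σ ^ t : R ≃+* R) z₀)
        = (σ ^ (t - 1 : ℤ) : R ≃+* R) z₀ := by
      rw [zpow_zpow_apply]; exact zpow_exp_congr σ (by ring) z₀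
    rw [e] at h
    exact h
  have hA0 : Af σ (g' * c) z₀ 0 = ℓ := by
    show vv ((σ ^ (0:ℤ) : R ≃+* R) z₀) (g' * c) = ℓ
    rw [zpow_zero]; rfl
  -- iterated bounds
  have hLB : ∀ k : ℕ, ℓ ≤ Af σ (g' * c) z₀ (-(k : ℤ)) + Qsum σ q z₀ k := by
    intro k
    induction k with
    | zero => simp [Qsum, hA0]
    | succ k ih =>
      have h2 := hineq2 (-(k : ℤ))
      have hsum : Qsum σ q z₀ (k + 1) = Qsum σ q z₀ k + Af σ q z₀ (-(k : ℤ)) :=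
        Finset.sum_range_succ _ _
      have hcast : (-(↑(k+1)) : ℤ) = -(k : ℤ) - 1 := by omega
      rw [hcast, hsum]
      omega
  have hRB : ∀ k : ℕ, ℓ ≤ Af σ (g' * c) z₀ (k : ℤ) + Psum σ p z₀ k := by
    intro k
    induction k with
    | zero => simp [Psum, hA0]
    | succ k ih =>
      have h1 := hineq1 (k : ℤ)
      have hsum : Psum σ p z₀ (k + 1) = Psum σ p z₀ k + Af σ p z₀ (k : ℤ) :=
        Finset.sum_range_succ _ _
      have hcast : ((↑(k+1)) : ℤ) = (k : ℤ) + 1 := by omega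
      rw [hcast, hsum]
      omega
  -- reachability
  have hreachQ : ∃ k : ℕ, ℓ ≤ Qsum σ q z₀ k := by
    by_contra h
    push_neg at h
    apply not_forall_orbit_dvd σ horb hz₀irr hg (fun k => -(k : ℤ))
      (fun a b hab => by simp only [neg_inj, Nat.cast_inj] at hab; exact hab)
    intro k
    apply dvd_of_vv_pos
    have h1 := hLB k
    have h2 := h k
    show 1 ≤ Af σ (g' * c) z₀ (-(k : ℤ))
    omega
  have hreachP : ∃ k : ℕ, ℓ ≤ Psum σ p z₀ k := by
    by_contra h
    push_neg at h
    apply not_forall_orbit_dvd σ horb hz₀irr hg (fun k => (k : ℤ))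
      (fun a b hab => by simp only [Nat.cast_inj] at hab; exact hab)
    intro k
    apply dvd_of_vv_pos
    have h1 := hRB k
    have h2 := h k
    show 1 ≤ Af σ (g' * c) z₀ ((k : ℤ))
    omega
  set i : ℕ := Nat.find hreachQ with hidef
  have hi : ℓ ≤ Qsum σ q z₀ i := Nat.find_spec hreachQ
  have hi1 : 1 ≤ i := by
    rcases Nat.eq_zero_or_pos i with h0 | h0
    · exfalso; rw [h0] at hi; simp [Qsum] at hi; omega
    · exact h0
  have hQlt : Qsum σ q z₀ (i - 1) < ℓ := by
    have := Nat.find_min hreachQ (m := i - 1) (by omega)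
    omega
  set j : ℕ := Nat.find hreachP with hjdef
  have hj : ℓ ≤ Psum σ p z₀ j := Nat.find_spec hreachP
  have hj1 : 1 ≤ j := by
    rcases Nat.eq_zero_or_pos j with h0 | h0
    · exfalso; rw [h0] at hj; simp [Psum] at hj; omega
    · exact h0
  have hPlt : Psum σ p z₀ (j - 1) < ℓ := by
    have := Nat.find_min hreachP (m := j - 1) (by omega)
    omega
  set α : ℕ := ℓ - Qsum σ q z₀ (i - 1) with hαdef
  set β : ℕ := ℓ - Psum σ p z₀ (j - 1) with hβdef
  have hQsumStep : Qsum σ q z₀ i = Qsum σ q z₀ (i-1) + Af σ q z₀ (-((i-1 : ℕ) : ℤ)) := by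
    have h1 : i - 1 + 1 = i := by omega
    have := Finset.sum_range_succ (fun t : ℕ => Af σ q z₀ (-(t : ℤ))) (i - 1)
    rw [h1] at this
    exact this
  have hPsumStep : Psum σ p z₀ j = Psum σ p z₀ (j-1) + Af σ p z₀ ((j-1 : ℕ) : ℤ) := by
    have h1 : j - 1 + 1 = j := by omega
    have := Finset.sum_range_succ (fun t : ℕ => Af σ p z₀ ((t : ℤ))) (j - 1)
    rw [h1] at this
    exact this
  have hα1 : 1 ≤ α := by omega
  have hβ1 : 1 ≤ β := by omega
  have hαQ : α ≤ Af σ q z₀ (-((i-1 : ℕ) : ℤ)) := by omega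
  have hβP : β ≤ Af σ p z₀ ((j-1 : ℕ) : ℤ) := by omega
  -- the pyramid corners
  set x' : R := (σ ^ (-((i-1 : ℕ) : ℤ)) : R ≃+* R) z₀ with hx'def
  set y' : R := (σ ^ ((j-1 : ℕ) : ℤ) : R ≃+* R) z₀ with hy'def
  set x : R := rep x' with hxdef
  set y : R := rep y' with hydef
  have hx'q : 1 ≤ vv x' q := le_trans hα1 hαQ
  have hy'p : 1 ≤ vv y' p := le_trans hβ1 hβP
  -- bridge between ℕ-powers at x and Af at z₀
  have hbridge : ∀ (t : ℕ) (w : R), vv ((σ ^ t) x) w = Af σ w z₀ ((t : ℤ) - ((i-1 : ℕ) : ℤ)) := by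
    intro t w
    have h1 : Associated x' x := rep_assoc x'
    have h2 : Associated ((σ ^ t : R ≃+* R) x') ((σ ^ t) x) :=
      h1.map ((σ ^ t : R ≃+* R) : R →* R)
    rw [← vv_congr h2 w]
    have h4 : (σ ^ t : R ≃+* R) x' = (σ ^ ((t : ℤ) - ((i-1 : ℕ) : ℤ)) : R ≃+* R) z₀ := by
      rw [← pow_natCast_apply, hx'def, zpow_zpow_apply]
      exact zpow_exp_congr σ (by ring) z₀
    rw [h4]
    rfl
  have hybridge : ∀ (t : ℕ) (w : R), vv ((σ ^ t) y) w = Af σ w z₀ ((t : ℤ) + ((j-1 : ℕ) : ℤ)) := by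
    intro t w
    have h1 : Associated y' y := rep_assoc y'
    have h2 : Associated ((σ ^ t : R ≃+* R) y') ((σ ^ t) y) :=
      h1.map ((σ ^ t : R ≃+* R) : R →* R)
    rw [← vv_congr h2 w]
    have h4 : (σ ^ t : R ≃+* R) y' = (σ ^ ((t : ℤ) + ((j-1 : ℕ) : ℤ)) : R ≃+* R) z₀ := by
      rw [← pow_natCast_apply, hy'def, zpow_zpow_apply]
    rw [h4]
    rfl
  set n : ℕ := (i - 1) + (j - 1) with hndef
  -- the sum identities
  have SQ : ∀ k, k ≤ i - 1 →
      (∑ t ∈ Finset.Icc 1 k, vv ((σ ^ t) x) q) + Qsum σ q z₀ (i-1-k) = Qsum σ q z₀ (i-1) := by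
    intro k
    induction k with
    | zero => intro _; simp
    | succ k ih =>
      intro hk
      have hk' : k ≤ i - 1 := by omega
      have ihr := ih hk'
      have hstep : (∑ t ∈ Finset.Icc 1 (k+1), vv ((σ ^ t) x) q)
          = (∑ t ∈ Finset.Icc 1 k, vv ((σ ^ t) x) q) + vv ((σ ^ (k+1)) x) q := by
        rw [Finset.sum_Icc_succ_top (by omega : 1 ≤ k + 1)]
      have hval : vv ((σ ^ (k+1)) x) q = Af σ q z₀ (-(((i-1-(k+1)) : ℕ) : ℤ)) := by
        rw [hbridge]
        congr 1
        omega
      have hQ : Qsum σ q z₀ (i-1-k) = Qsum σ q z₀ (i-1-(k+1)) + Af σ q z₀ (-(((i-1-(k+1)) : ℕ) : ℤ)) := by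
        have h1 : (i-1-(k+1)) + 1 = i-1-k := by omega
        have := Finset.sum_range_succ (fun t : ℕ => Af σ q z₀ (-(t : ℤ))) (i-1-(k+1))
        rw [h1] at this
        exact this
      have := ihr
      omega
  have SP : ∀ d, d ≤ j - 1 →
      (∑ t ∈ Finset.Ico ((i-1)+(j-1-d)) n, vv ((σ ^ t) x) p) + Psum σ p z₀ (j-1-d)
        = Psum σ p z₀ (j-1) := by
    intro d
    induction d with
    | zero =>
      intro _
      have h1 : (i-1)+(j-1-0) = n := by omega
      rw [h1]
      simp
    | succ d ih =>
      intro hd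
      have hd' : d ≤ j - 1 := by omega
      have ihr := ih hd'
      have hlt2 : (i-1)+(j-1-(d+1)) < n := by omega
      have hbot := Finset.sum_eq_sum_Ico_succ_bot hlt2 (fun t => vv ((σ ^ t) x) p)
      have hval : vv ((σ ^ ((i-1)+(j-1-(d+1)))) x) p = Af σ p z₀ (((j-1-(d+1)) : ℕ) : ℤ) := by
        rw [hbridge]
        congr 1
        omega
      have hP : Psum σ p z₀ (j-1-d) = Psum σ p z₀ (j-1-(d+1)) + Af σ p z₀ (((j-1-(d+1)) : ℕ) : ℤ) := by
        have h1 : (j-1-(d+1)) + 1 = j-1-d := by omega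
        have := Finset.sum_range_succ (fun t : ℕ => Af σ p z₀ ((t : ℤ))) (j-1-(d+1))
        rw [h1] at this
        exact this
      have hsucc : (i-1)+(j-1-(d+1)) + 1 = (i-1)+(j-1-d) := by omega
      rw [hsucc] at hbot
      have := ihr
      omega
  -- the pyramid is a pyramid for g = g' * c
  have hassoc_n : Associated ((σ ^ n) x) y := by
    have h1 : Associated x' x := rep_assoc x'
    have h2 : Associated ((σ ^ n : R ≃+* R) x') ((σ ^ n) x) :=
      h1.map ((σ ^ n : R ≃+* R) : R →* R)
    have h4 : (σ ^ n : R ≃+* R) x' = y' := by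
      rw [← pow_natCast_apply, hx'def, zpow_zpow_apply, hy'def]
      exact zpow_exp_congr σ (by omega) z₀
    rw [h4] at h2
    exact h2.symm.trans (rep_assoc y')
  have hmemg : pyrCond σ p q (g' * c) x y α β := by
    refine ⟨n, hassoc_n, ?_⟩
    intro k hk
    by_cases hki : k ≤ i - 1
    · apply le_trans (min_le_left _ _)
      have hsq := SQ k hki
      have hlb := hLB (i-1-k)
      have hval : vv ((σ ^ k) x) (g' * c) = Af σ (g' * c) z₀ (-(((i-1-k) : ℕ) : ℤ)) := by
        rw [hbridge]
        congr 1
        omega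
      rw [hval]
      omega
    · apply le_trans (min_le_right _ _)
      push_neg at hki
      set d : ℕ := n - k with hddef
      have hd : d ≤ j - 1 := by omega
      have hk2 : (i-1)+(j-1-d) = k := by omega
      have hsp := SP d hd
      rw [hk2] at hsp
      have hrb := hRB (k - (i-1))
      have hval : vv ((σ ^ k) x) (g' * c) = Af σ (g' * c) z₀ (((k - (i-1)) : ℕ) : ℤ) := by
        rw [hbridge]
        congr 1
        omega
      rw [hval]
      have hjd : j-1-d = k - (i-1) := by omega
      rw [hjd] at hsp
      omega
  -- the pyramid is NOT a pyramid for g'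
  have hnmemg' : ¬ pyrCond σ p q g' x y α β := by
    rintro ⟨n', hn', hcond⟩
    have hn'n : n' = n := by
      by_contra hne
      have h2 : Associated ((σ ^ n') x) ((σ ^ n) x) := hn'.trans hassoc_n.symm
      have h3 : Associated ((σ ^ ((n' : ℤ) - ((i-1:ℕ) : ℤ)) : R ≃+* R) z₀)
          ((σ ^ ((n : ℤ) - ((i-1:ℕ) : ℤ)) : R ≃+* R) z₀) := by
        have ha : Associated x' x := rep_assoc x'
        have e1 : (σ ^ n' : R ≃+* R) x' = (σ ^ ((n' : ℤ) - ((i-1:ℕ) : ℤ)) : R ≃+* R) z₀ := by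
          rw [← pow_natCast_apply, hx'def, zpow_zpow_apply]
          exact zpow_exp_congr σ (by ring) z₀
        have e2 : (σ ^ n : R ≃+* R) x' = (σ ^ ((n : ℤ) - ((i-1:ℕ) : ℤ)) : R ≃+* R) z₀ := by
          rw [← pow_natCast_apply, hx'def, zpow_zpow_apply]
          exact zpow_exp_congr σ (by ring) z₀
        have b1 : Associated ((σ ^ n' : R ≃+* R) x') ((σ ^ n') x) :=
          ha.map ((σ ^ n' : R ≃+* R) : R →* R)
        have b2 : Associated ((σ ^ n : R ≃+* R) x') ((σ ^ n) x) :=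
          ha.map ((σ ^ n : R ≃+* R) : R →* R)
        rw [e1] at b1
        rw [e2] at b2
        exact (b1.trans h2).trans b2.symm
      exact orb_ne σ horb hz₀irr (by omega : ((n' : ℤ) - ((i-1:ℕ) : ℤ)) ≠ ((n : ℤ) - ((i-1:ℕ) : ℤ))) h3
    subst hn'n
    have hcond1 := hcond (i-1) (by omega)
    have hsq := SQ (i-1) le_rfl
    have hsq0 : Qsum σ q z₀ (i-1-(i-1)) = 0 := by
      have : i-1-(i-1) = 0 := by omega
      rw [this]
      simp [Qsum]
    have hsp := SP (j-1) le_rfl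
    have hsp2 : (i-1)+(j-1-(j-1)) = i - 1 := by omega
    rw [hsp2] at hsp
    have hsp0 : Psum σ p z₀ (j-1-(j-1)) = 0 := by
      have : j-1-(j-1) = 0 := by omega
      rw [this]
      simp [Psum]
    have hval : vv ((σ ^ (i-1)) x) g' = vv z₀ g' := by
      rw [hbridge]
      have e0 : ((i-1 : ℕ) : ℤ) - ((i-1 : ℕ) : ℤ) = 0 := by ring
      rw [e0]
      show Af σ g' z₀ 0 = vv z₀ g'
      unfold Af
      rw [zpow_zero]
      rfl
    rw [hval] at hcond1
    have hminℓ : min (α + ∑ t ∈ Finset.Icc 1 (i-1), vv ((σ ^ t) x) q)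
        (β + ∑ t ∈ Finset.Ico (i-1) n, vv ((σ ^ t) x) p) = ℓ := by
      have e1 : α + ∑ t ∈ Finset.Icc 1 (i-1), vv ((σ ^ t) x) q = ℓ := by omega
      have e2 : β + ∑ t ∈ Finset.Ico (i-1) n, vv ((σ ^ t) x) p = ℓ := by omega
      rw [e1, e2, min_self]
    rw [hminℓ] at hcond1
    omega
  -- membership of x, y in the index sets
  have hxmem : x ∈ ((factors q).map rep).toFinset := by
    obtain ⟨u, hu, hassoc⟩ := exists_mem_factors_of_dvd hq
      (irreducible_zpow hz₀irr _) (dvd_of_vv_pos hx'q)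
    apply Multiset.mem_toFinset.mpr
    apply Multiset.mem_map.mpr
    exact ⟨u, hu, rep_eq_iff.mpr hassoc.symm⟩
  have hymem : y ∈ ((factors p).map rep).toFinset := by
    obtain ⟨u, hu, hassoc⟩ := exists_mem_factors_of_dvd hp
      (irreducible_zpow hz₀irr _) (dvd_of_vv_pos hy'p)
    apply Multiset.mem_toFinset.mpr
    apply Multiset.mem_map.mpr
    exact ⟨u, hu, rep_eq_iff.mpr hassoc.symm⟩
  -- strict inequality of numP at (x, y)
  have hvvx : vv x q = vv x' q := (vv_congr (rep_assoc x') q).symm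
  have hvvy : vv y p = vv y' p := (vv_congr (rep_assoc y') p).symm
  have habmem : (α, β) ∈ (Finset.Icc 1 (vv x q)) ×ˢ (Finset.Icc 1 (vv y p)) := by
    rw [Finset.mem_product, Finset.mem_Icc, Finset.mem_Icc]
    refine ⟨⟨hα1, ?_⟩, hβ1, ?_⟩
    · rw [hvvx]; exact hαQ
    · rw [hvvy]; exact hβP
  have hnum : numP σ p q g' x y < numP σ p q (g' * c) x y := by
    apply Finset.card_lt_card
    constructor
    · apply Finset.monotone_filter_right
      rintro ⟨a, b⟩ _ ⟨n₁, hn₁, hcond₁⟩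
      exact ⟨n₁, hn₁, fun k hk => (hcond₁ k hk).trans
        (vv_le_of_dvd hg (Dvd.intro c rfl) _)⟩
    · intro hsub
      have := hsub (Finset.mem_filter.mpr ⟨habmem, hmemg⟩)
      exact hnmemg' (Finset.mem_filter.mp this).2
  -- conclude
  apply Finset.sum_lt_sum
  · rintro ⟨a, b⟩ _
    apply Finset.card_le_card
    apply Finset.monotone_filter_right
    rintro ⟨a₁, b₁⟩ _ ⟨n₁, hn₁, hcond₁⟩
    exact ⟨n₁, hn₁, fun k hk => (hcond₁ k hk).trans
      (vv_le_of_dvd hg (Dvd.intro c rfl) _)⟩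
  · exact ⟨(x, y), Finset.mem_product.mpr ⟨hxmem, hymem⟩, hnum⟩

end StmtTwo

open UniqueFactorizationMonoid in
open scoped Classical in
/-- Over a PID with all `σ`-orbits of irreducibles infinite, the length
of the rank-one `R`-free module `V_p` is at most `1 + N`, where `N` counts (with
multiplicity) the pairs `(z,w)` of irreducible factors of `q` and `p` respectively with
`w ∼ σ^n(z)` for some `n ≥ 0`: every strictly increasing chain `I₀ ⊊ ⋯ ⊊ I_m` of
`(p,q)`-invariant ideals has `m ≤ 1 + N`. -/
theorem stmt_2 {R : Type*} [CommRing R] [IsDomain R] [IsPrincipalIdealRing R]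
    (σ : R ≃+* R)
    (horb : ∀ z : R, Irreducible z → ∀ m : ℕ, 1 ≤ m → ¬ Associated ((σ ^ m) z) z)
    (p q : R) (hp : p ≠ 0) (hq : q ≠ 0)
    (N : ℕ)
    (hN : N = Multiset.card ((factors q ×ˢ factors p).filter
      (fun zw => ∃ n : ℕ, Associated ((σ ^ n) zw.1) zw.2)))
    (m : ℕ) (I : Fin (m + 1) → Ideal R)
    (hchain : StrictMono I) (hinv : ∀ j, PQInvariant σ p q (I j)) :
    m ≤ 1 + N := by
  classical
  have hex : ∀ j : Fin (m+1), ∃ g : R, I j = Ideal.span {g} :=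
    fun j => (IsPrincipalIdealRing.principal (I j)).1
  choose gen hspan' using hex
  have hspan : ∀ j, Ideal.span {gen j} = I j := fun j => (hspan' j).symm
  have hgenne : ∀ j, I j ≠ ⊥ → gen j ≠ 0 := by
    intro j hj h0
    apply hj
    rw [← hspan j, h0]
    simp
  have hPhiN : ∀ g : R, StmtTwo.Phi σ p q g ≤ N := by
    intro g
    rw [hN]
    exact StmtTwo.Phi_le_N σ p q g
  -- one strict step
  have step : ∀ a b : Fin (m+1), a < b → I a ≠ ⊥ →
      StmtTwo.Phi σ p q (gen b) < StmtTwo.Phi σ p q (gen a) := by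
    intro a b hab hA
    have hIlt : I a < I b := hchain hab
    have hB : I b ≠ ⊥ := by
      intro h0
      rw [h0] at hIlt
      exact not_lt_bot hIlt
    have hgA : gen a ≠ 0 := hgenne a hA
    have hgB : gen b ≠ 0 := hgenne b hB
    have hdvd : gen b ∣ gen a := by
      rw [← Ideal.mem_span_singleton, hspan b]
      exact le_of_lt hIlt (by rw [← hspan a]; exact Ideal.mem_span_singleton_self _)
    have hndvd : ¬ gen a ∣ gen b := by
      intro h
      have hle : I b ≤ I a := by
        rw [← hspan a, ← hspan b]
        exact Ideal.span_singleton_le_span_singleton.mpr h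
      exact absurd hle (not_le_of_gt hIlt)
    have hinv' : PQInvariant σ p q (Ideal.span {gen a}) := by
      rw [hspan a]
      exact hinv a
    exact StmtTwo.Phi_strict σ horb hp hq hgA hgB hdvd hndvd hinv'
  -- iterated decrease
  have main : ∀ d : ℕ, ∀ a : ℕ, ∀ (h : a + d ≤ m), I ⟨a, by omega⟩ ≠ ⊥ →
      StmtTwo.Phi σ p q (gen ⟨a + d, by omega⟩) + d ≤ StmtTwo.Phi σ p q (gen ⟨a, by omega⟩) := by
    intro d
    induction d with
    | zero =>
      intro a h hA
      have efin : (⟨a + 0, by omega⟩ : Fin (m+1)) = ⟨a, by omega⟩ := by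
        simp only [Fin.mk.injEq]
        omega
      rw [efin]
      omega
    | succ d ih =>
      intro a h hA
      have hab : (⟨a, by omega⟩ : Fin (m+1)) < ⟨a + 1, by omega⟩ := by
        simp only [Fin.mk_lt_mk]
        omega
      have hstep := step _ _ hab hA
      have hA1 : I ⟨a + 1, by omega⟩ ≠ ⊥ := by
        intro h0
        have := hchain hab
        rw [h0] at this
        exact not_lt_bot this
      have hind := ih (a + 1) (by omega) hA1
      have efin : (⟨a + 1 + d, by omega⟩ : Fin (m+1)) = ⟨a + (d + 1), by omega⟩ := by
        simp only [Fin.mk.injEq]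
        omega
      rw [efin] at hind
      omega
  by_cases hbot : I ⟨0, by omega⟩ = ⊥
  · rcases Nat.eq_zero_or_pos m with hm | hm
    · omega
    · have hab : (⟨0, by omega⟩ : Fin (m+1)) < ⟨1, by omega⟩ := by
        simp only [Fin.mk_lt_mk]
        omega
      have hA1 : I ⟨1, by omega⟩ ≠ ⊥ := by
        intro h0
        have := hchain hab
        rw [h0] at this
        exact not_lt_bot this
      have h1 := main (m - 1) 1 (by omega) hA1
      have h2 := hPhiN (gen ⟨1, by omega⟩)
      omega
  · have h1 := main m 0 (by omega) hbot
    have h2 := hPhiN (gen ⟨0, by omega⟩)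
    omega
end

section
/- Let f, P, Q : ℤ → ℕ with f finitely supported. Then the following are equivalent: (i) for every k ∈ ℤ, f(k) − f(k+1) ≤ P(k) and f(k) − f(k−1) ≤ Q(k) (inequalities in ℤ); (ii) there exists a finite multiset M of pairs (a,b) of integers with a ≤ b such that for every k ∈ ℤ, f(k) equals the number of pairs (a,b) ∈ M (with multiplicity) satisfying a ≤ k ≤ b, the number of pairs in M with first coordinate equal to k is at most Q(k), and the number of pairs in M with second coordinate equal to k is at most P(k). -/
private lemma count_le_aux {M : Multiset (ℤ × ℤ)} (p q r : ℤ × ℤ → Prop)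
    [DecidablePred p] [DecidablePred q] [DecidablePred r]
    (h : ∀ ab, p ab → q ab ∨ r ab) :
    Multiset.card (M.filter p) ≤ Multiset.card (M.filter q) + Multiset.card (M.filter r) := by
  have h1 : M.filter p ≤ M.filter (fun ab => q ab ∨ r ab) :=
    Multiset.monotone_filter_right M h
  have h2 := congrArg Multiset.card (Multiset.filter_add_filter q r M)
  simp only [Multiset.card_add] at h2
  have h3 := Multiset.card_le_card h1
  omega

private lemma exists_multiset : ∀ (n : ℕ) (f P Q : ℤ → ℕ) (hf : {k : ℤ | f k ≠ 0}.Finite),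
    hf.toFinset.sum f = n →
    (∀ k : ℤ, (f k : ℤ) - f (k + 1) ≤ P k ∧ (f k : ℤ) - f (k - 1) ≤ Q k) →
    ∃ M : Multiset (ℤ × ℤ),
      (∀ ab ∈ M, ab.1 ≤ ab.2) ∧
      ∀ k : ℤ,
        f k = Multiset.card (M.filter (fun ab => ab.1 ≤ k ∧ k ≤ ab.2)) ∧
        Multiset.card (M.filter (fun ab => ab.1 = k)) ≤ Q k ∧
        Multiset.card (M.filter (fun ab => ab.2 = k)) ≤ P k := by
  intro n
  induction n using Nat.strong_induction_on with
  | _ n IH =>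
    intro f P Q hf hsum hineq
    by_cases h0 : ∀ k, f k = 0
    · exact ⟨0, by simp, fun k => by simp [h0]⟩
    push_neg at h0
    obtain ⟨k0, hk0⟩ := h0
    -- right endpoint
    have hexb : ∃ m : ℕ, f (k0 + ((m : ℤ) + 1)) = 0 := by
      obtain ⟨u, hu⟩ := hf.bddAbove
      refine ⟨(u - k0).toNat, ?_⟩
      by_contra h
      have h1 := hu (Set.mem_setOf.mpr h)
      have h2 := Int.self_le_toNat (u - k0)
      omega
    have hexa : ∃ m : ℕ, f (k0 - ((m : ℤ) + 1)) = 0 := by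
      obtain ⟨u, hu⟩ := hf.bddBelow
      refine ⟨(k0 - u).toNat, ?_⟩
      by_contra h
      have h1 := hu (Set.mem_setOf.mpr h)
      have h2 := Int.self_le_toNat (k0 - u)
      omega
    set nb := Nat.find hexb with hnb
    set na := Nat.find hexa with hna
    set b := k0 + (nb : ℤ) with hbdef
    set a := k0 - (na : ℤ) with hadef
    have hab : a ≤ b := by omega
    have hfb0 : f (b + 1) = 0 := by
      have := Nat.find_spec hexb
      rwa [show k0 + ((nb : ℤ) + 1) = b + 1 by omega] at this
    have hfa0 : f (a - 1) = 0 := by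
      have := Nat.find_spec hexa
      rwa [show k0 - ((na : ℤ) + 1) = a - 1 by omega] at this
    have hpos : ∀ j, a ≤ j → j ≤ b → 1 ≤ f j := by
      intro j hj1 hj2
      rcases le_or_gt j k0 with hj | hj
      · rcases eq_or_lt_of_le hj with h | h
        · subst h; omega
        · have hm : (k0 - j).toNat - 1 < na := by omega
          have hx := Nat.find_min hexa hm
          rw [show k0 - ((((k0 - j).toNat - 1 : ℕ) : ℤ) + 1) = j by omega] at hx
          omega
      · have hm : (j - k0).toNat - 1 < nb := by omega
        have hx := Nat.find_min hexb hm
        rw [show k0 + ((((j - k0).toNat - 1 : ℕ) : ℤ) + 1) = j by omega] at hx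
        omega
    have hfb1 : 1 ≤ f b := hpos b hab le_rfl
    have hfa1 : 1 ≤ f a := hpos a le_rfl hab
    have hPb : 1 ≤ P b := by have := (hineq b).1; omega
    have hQa : 1 ≤ Q a := by
      have := (hineq a).2
      rw [hfa0] at this
      omega
    set f' : ℤ → ℕ := fun k => if a ≤ k ∧ k ≤ b then f k - 1 else f k with hf'def
    set P' : ℤ → ℕ := fun k => if k = b then P b - 1 else P k with hP'def
    set Q' : ℤ → ℕ := fun k => if k = a then Q a - 1 else Q k with hQ'def
    have hf'le : ∀ k, f' k ≤ f k := by
      intro k; simp only [hf'def]; split_ifs <;> omega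
    have hf' : {k : ℤ | f' k ≠ 0}.Finite := by
      apply hf.subset
      intro k hk
      simp only [Set.mem_setOf_eq] at hk ⊢
      intro h
      apply hk
      simp only [hf'def, h]
      split_ifs <;> rfl
    have hineq' : ∀ k : ℤ, (f' k : ℤ) - f' (k + 1) ≤ P' k ∧ (f' k : ℤ) - f' (k - 1) ≤ Q' k := by
      intro k
      have h1 := (hineq k).1
      have h2 := (hineq k).2
      constructor
      · by_cases hkb : k = b
        · subst hkb
          have g1 : f' b = f b - 1 := if_pos ⟨hab, le_rfl⟩
          have g2 : f' (b + 1) = f (b + 1) := if_neg (by omega)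
          have g3 : P' b = P b - 1 := if_pos rfl
          rw [g1, g2, g3]; omega
        · have g3 : P' k = P k := if_neg hkb
          by_cases hk1 : a ≤ k + 1 ∧ k + 1 ≤ b
          · by_cases hka : a ≤ k
            · have g1 : f' k = f k - 1 := if_pos ⟨hka, by omega⟩
              have g2 : f' (k + 1) = f (k + 1) - 1 := if_pos hk1
              have := hpos k hka (by omega)
              have := hpos (k + 1) hk1.1 hk1.2
              rw [g1, g2, g3]; omega
            · have hE : k = a - 1 := by omega
              have g1 : f' k = f k := if_neg (by omega)
              have g2 : f' (k + 1) = f (k + 1) - 1 := if_pos hk1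
              have e : k + 1 = a := by omega
              rw [g1, g2, g3, e, hE, hfa0]
              omega
          · have g2 : f' (k + 1) = f (k + 1) := if_neg hk1
            by_cases hka : a ≤ k ∧ k ≤ b
            · have g1 : f' k = f k - 1 := if_pos hka
              rw [g1, g2, g3]; omega
            · have g1 : f' k = f k := if_neg hka
              rw [g1, g2, g3]; omega
      · by_cases hka : k = a
        · subst hka
          have g1 : f' a = f a - 1 := if_pos ⟨le_rfl, hab⟩
          have g2 : f' (a - 1) = f (a - 1) := if_neg (by omega)
          have g3 : Q' a = Q a - 1 := if_pos rfl
          rw [g1, g2, g3]; omega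
        · have g3 : Q' k = Q k := if_neg hka
          by_cases hk1 : a ≤ k - 1 ∧ k - 1 ≤ b
          · by_cases hkb : k ≤ b
            · have g1 : f' k = f k - 1 := if_pos ⟨by omega, hkb⟩
              have g2 : f' (k - 1) = f (k - 1) - 1 := if_pos hk1
              have := hpos k (by omega) hkb
              have := hpos (k - 1) hk1.1 hk1.2
              rw [g1, g2, g3]; omega
            · have hE : k = b + 1 := by omega
              have g1 : f' k = f k := if_neg (by omega)
              have g2 : f' (k - 1) = f (k - 1) - 1 := if_pos hk1
              have e : k - 1 = b := by omega
              rw [g1, g2, g3, e, hE, hfb0]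
              omega
          · have g2 : f' (k - 1) = f (k - 1) := if_neg hk1
            by_cases hkb : a ≤ k ∧ k ≤ b
            · have g1 : f' k = f k - 1 := if_pos hkb
              rw [g1, g2, g3]; omega
            · have g1 : f' k = f k := if_neg hkb
              rw [g1, g2, g3]; omega
    have hsubset : hf'.toFinset ⊆ hf.toFinset := by
      intro x hx
      rw [Set.Finite.mem_toFinset] at hx ⊢
      simp only [Set.mem_setOf_eq] at hx ⊢
      intro h
      apply hx
      simp only [hf'def, h]
      split_ifs <;> rfl
    have hs1 : hf'.toFinset.sum f' = hf.toFinset.sum f' := by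
      apply Finset.sum_subset hsubset
      intro x _ hx
      rw [Set.Finite.mem_toFinset] at hx
      simpa using hx
    have hlt : hf'.toFinset.sum f' < n := by
      rw [hs1, ← hsum]
      apply Finset.sum_lt_sum (fun i _ => hf'le i)
      refine ⟨k0, (Set.Finite.mem_toFinset hf).mpr hk0, ?_⟩
      have g1 : f' k0 = f k0 - 1 := if_pos ⟨by omega, by omega⟩
      omega
    obtain ⟨M', hM'1, hM'2⟩ := IH (hf'.toFinset.sum f') hlt f' P' Q' hf' rfl hineq'
    refine ⟨(a, b) ::ₘ M', ?_, ?_⟩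
    · intro ab hab'
      rcases Multiset.mem_cons.mp hab' with h | h
      · rw [h]; exact hab
      · exact hM'1 ab h
    · intro k
      obtain ⟨e1, e2, e3⟩ := hM'2 k
      refine ⟨?_, ?_, ?_⟩
      · rw [Multiset.filter_cons, Multiset.card_add, ← e1]
        by_cases h : a ≤ k ∧ k ≤ b
        · rw [if_pos (show (a, b).1 ≤ k ∧ k ≤ (a, b).2 from h)]
          have g1 : f' k = f k - 1 := if_pos h
          have := hpos k h.1 h.2
          simp only [Multiset.card_singleton]
          omega
        · rw [if_neg (show ¬((a, b).1 ≤ k ∧ k ≤ (a, b).2) from h)]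
          have g1 : f' k = f k := if_neg h
          simp [g1]
      · rw [Multiset.filter_cons, Multiset.card_add]
        by_cases h : a = k
        · rw [if_pos (show (a, b).1 = k from h)]
          have eq1 : Q' k = Q a - 1 := if_pos h.symm
          have eq2 : Q a = Q k := by rw [h]
          simp only [Multiset.card_singleton]
          omega
        · rw [if_neg (show ¬((a, b).1 = k) from h)]
          have eq1 : Q' k = Q k := if_neg (fun hh => h hh.symm)
          simpa [eq1] using e2
      · rw [Multiset.filter_cons, Multiset.card_add]
        by_cases h : b = k
        · rw [if_pos (show (a, b).2 = k from h)]
          have eq1 : P' k = P b - 1 := if_pos h.symm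
          have eq2 : P b = P k := by rw [h]
          simp only [Multiset.card_singleton]
          omega
        · rw [if_neg (show ¬((a, b).2 = k) from h)]
          have eq1 : P' k = P k := if_neg (fun hh => h hh.symm)
          simpa [eq1] using e3

/-- Combinatorial core of the classification of cyclic submodules of
`V_p` in the infinite-orbit case: a finitely supported function `f : ℤ → ℕ` satisfies the
difference inequalities governed by `P` and `Q` iff `f` is the "interval-count" function
of a finite multiset of integer intervals whose left endpoints are bounded by `Q` and
whose right endpoints are bounded by `P`. -/
theorem stmt_4 (f P Q : ℤ → ℕ) (hf : {k : ℤ | f k ≠ 0}.Finite) :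
    (∀ k : ℤ, (f k : ℤ) - f (k + 1) ≤ P k ∧ (f k : ℤ) - f (k - 1) ≤ Q k) ↔
      ∃ M : Multiset (ℤ × ℤ),
        (∀ ab ∈ M, ab.1 ≤ ab.2) ∧
        ∀ k : ℤ,
          f k = Multiset.card (M.filter (fun ab => ab.1 ≤ k ∧ k ≤ ab.2)) ∧
          Multiset.card (M.filter (fun ab => ab.1 = k)) ≤ Q k ∧
          Multiset.card (M.filter (fun ab => ab.2 = k)) ≤ P k := by
  constructor
  · intro h
    exact exists_multiset _ f P Q hf rfl h
  · rintro ⟨M, hM, hMk⟩ k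
    obtain ⟨e1, e2, e3⟩ := hMk k
    obtain ⟨e1p, -, -⟩ := hMk (k + 1)
    obtain ⟨e1m, -, -⟩ := hMk (k - 1)
    constructor
    · have key := count_le_aux (M := M) (fun ab => ab.1 ≤ k ∧ k ≤ ab.2)
        (fun ab => ab.1 ≤ k + 1 ∧ k + 1 ≤ ab.2) (fun ab => ab.2 = k)
        (fun ab ⟨h1, h2⟩ => by omega)
      omega
    · have key := count_le_aux (M := M) (fun ab => ab.1 ≤ k ∧ k ≤ ab.2)
        (fun ab => ab.1 ≤ k - 1 ∧ k - 1 ≤ ab.2) (fun ab => ab.1 = k)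
        (fun ab ⟨h1, h2⟩ => by omega)
      omega
end

section
/- Let R be a unique factorization domain with a ring automorphism σ, let p, q ∈ R, and let g ∈ R be nonzero. Then the following are equivalent: (i) the principal ideal ⟨g⟩ is (p,q)-invariant; (ii) g divides σ^{−1}(g)·p and g divides σ(g)·q; (iii) the multiset of irreducible factors of g is contained, counting multiplicities and up to associates, in the multiset union of the irreducible factors of σ^{−1}(g) and the irreducible factors of p, and likewise the multiset of irreducible factors of g is contained in the multiset union of the irreducible factors of σ(g) and the irreducible factors of q. -/
private lemma rel_assoc_prod {R : Type*} [CommMonoid R] {s t : Multiset R}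
    (h : Multiset.Rel Associated s t) : Associated s.prod t.prod := by
  induction h with
  | zero => simp
  | cons h _ ih => simpa using h.mul_mul ih

private lemma rel_assoc_symm {R : Type*} [CommMonoid R] {s t : Multiset R}
    (h : Multiset.Rel Associated s t) : Multiset.Rel Associated t s :=
  (Multiset.rel_flip.mpr h).mono (fun _ _ _ _ hab => hab.symm)

private lemma exists_le_of_rel {R : Type*} [CommMonoid R] {u v F : Multiset R}
    (h : Multiset.Rel Associated u v)
    (hs : ∃ s ≤ u, Multiset.Rel Associated F s) :
    ∃ s ≤ v, Multiset.Rel Associated F s := by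
  haveI : IsTrans R Associated := ⟨fun _ _ _ => Associated.trans⟩
  obtain ⟨s, hle, hF⟩ := hs
  obtain ⟨t, rfl⟩ := Multiset.le_iff_exists_add.mp hle
  rw [Multiset.rel_add_left] at h
  obtain ⟨t1, t2, h1, _, rfl⟩ := h
  exact ⟨t1, Multiset.le_add_right _ _, hF.trans Associated h1⟩

open UniqueFactorizationMonoid in
private lemma dvd_iff_aux {R : Type*} [CommRing R] [IsDomain R] [UniqueFactorizationMonoid R]
    {g x : R} (hg : g ≠ 0) (hx : x ≠ 0) :
    g ∣ x ↔ ∃ s ≤ factors x, Multiset.Rel Associated (factors g) s := by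
  constructor
  · rintro ⟨c, rfl⟩
    have hc : c ≠ 0 := fun h => hx (by simp [h])
    have h1 : Multiset.Rel Associated (factors g + factors c) (factors (g * c)) :=
      rel_assoc_symm (factors_mul hg hc)
    rw [Multiset.rel_add_left] at h1
    obtain ⟨s, t, hs, ht, heq⟩ := h1
    exact ⟨s, heq ▸ Multiset.le_add_right _ _, hs⟩
  · rintro ⟨s, hle, hrel⟩
    have h1 : Associated g s.prod := (factors_prod hg).symm.trans (rel_assoc_prod hrel)
    have h2 : s.prod ∣ (factors x).prod := Multiset.prod_dvd_prod_of_le hle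
    exact h1.dvd.trans (h2.trans (factors_prod hx).dvd)

open UniqueFactorizationMonoid in
private lemma dvd_iff_aux' {R : Type*} [CommRing R] [IsDomain R] [UniqueFactorizationMonoid R]
    {g a b : R} (hg : g ≠ 0) (ha : a ≠ 0) (hb : b ≠ 0) :
    g ∣ a * b ↔ ∃ s ≤ factors a + factors b, Multiset.Rel Associated (factors g) s := by
  rw [dvd_iff_aux hg (mul_ne_zero ha hb)]
  exact ⟨exists_le_of_rel (factors_mul ha hb),
    exists_le_of_rel (rel_assoc_symm (factors_mul ha hb))⟩

open UniqueFactorizationMonoid in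
/-- For a UFD `R`, nonzero `g` and (nonzero) `p, q`, the following are
equivalent: `⟨g⟩` is `(p,q)`-invariant; `g ∣ σ⁻¹(g)·p` and `g ∣ σ(g)·q`; the multiset of
irreducible factors of `g` is contained (with multiplicity, up to associates) in the
multiset union of those of `σ⁻¹(g)` and of `p`, and likewise for `σ(g)` and `q`. -/
theorem stmt_5 {R : Type*} [CommRing R] [IsDomain R] [UniqueFactorizationMonoid R]
    (σ : R ≃+* R) (p q : R) (hp : p ≠ 0) (hq : q ≠ 0) (g : R) (hg : g ≠ 0) :
    List.TFAE [
      PQInvariant σ p q (Ideal.span {g}),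
      g ∣ σ⁻¹ g * p ∧ g ∣ σ g * q,
      (∃ s ≤ factors (σ⁻¹ g) + factors p, Multiset.Rel Associated (factors g) s) ∧
        (∃ s ≤ factors (σ g) + factors q, Multiset.Rel Associated (factors g) s)] := by
  have hσg : σ g ≠ 0 := fun h => hg (by simpa using congrArg σ.symm h)
  have hσig : σ⁻¹ g ≠ 0 := fun h => hg (by simpa using congrArg σ (h : σ.symm g = 0))
  tfae_have 1 → 2 := by
    intro h
    have := h g (Ideal.mem_span_singleton_self g)
    simpa [Ideal.mem_span_singleton] using this
  tfae_have 2 → 1 := by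
    rintro ⟨h1, h2⟩ i hi
    rw [Ideal.mem_span_singleton] at hi
    obtain ⟨c, rfl⟩ := hi
    constructor <;> rw [Ideal.mem_span_singleton]
    · have he : σ⁻¹ (g * c) * p = σ⁻¹ c * (σ⁻¹ g * p) := by
        rw [map_mul]; ring
      rw [he]
      exact Dvd.dvd.mul_left h1 _
    · have he : σ (g * c) * q = σ c * (σ g * q) := by
        rw [map_mul]; ring
      rw [he]
      exact Dvd.dvd.mul_left h2 _
  tfae_have 2 ↔ 3 := by
    rw [dvd_iff_aux' hg hσig hp, dvd_iff_aux' hg hσg hq]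
  tfae_finish
end

section
/- Let R be a unique factorization domain with a ring automorphism σ, let p, q ∈ R be nonzero, and let g = g₁·g₂⋯g_m where each g_i is a nonzero nonunit and, for all i ≠ j, no irreducible factor of g_i is an associate of σ^k applied to an irreducible factor of g_j for any integer k (the factors of distinct g_i lie in distinct σ-orbits). Then the principal ideal ⟨g⟩ is (p,q)-invariant if and only if ⟨g_i⟩ is (p,q)-invariant for every 1 ≤ i ≤ m; moreover ⟨g⟩ = ⋂_{i=1}^{m} ⟨g_i⟩. -/
private lemma relPrime_of_no_common_irred {R : Type*} [CommRing R] [IsDomain R]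
    [UniqueFactorizationMonoid R] {a b : R} (ha : a ≠ 0)
    (h : ∀ z : R, Irreducible z → z ∣ a → ¬ z ∣ b) : IsRelPrime a b := by
  intro d hda hdb
  by_contra hdu
  have hd0 : d ≠ 0 := by rintro rfl; exact ha (zero_dvd_iff.mp hda)
  obtain ⟨z, hz, hzd⟩ := WfDvdMonoid.exists_irreducible_factor hdu hd0
  exact h z hz (hzd.trans hda) (hzd.trans hdb)

/-- Orbit-wise reduction for cyclic submodules of `V_p` over a UFD:
if `g = g₁ ⋯ g_m` where the `gᵢ` are nonzero nonunits whose irreducible factors lie in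
pairwise distinct `σ`-orbits, then `⟨g⟩` is `(p,q)`-invariant iff each `⟨gᵢ⟩` is, and
moreover `⟨g⟩ = ⋂ᵢ ⟨gᵢ⟩`. -/
theorem stmt_6 {R : Type*} [CommRing R] [IsDomain R] [UniqueFactorizationMonoid R]
    (σ : R ≃+* R) (p q : R) (hp : p ≠ 0) (hq : q ≠ 0)
    (m : ℕ) (g : Fin m → R)
    (hg0 : ∀ i, g i ≠ 0) (hgu : ∀ i, ¬ IsUnit (g i))
    (hdisj : ∀ i j, i ≠ j → ∀ z w : R, Irreducible z → z ∣ g i → Irreducible w → w ∣ g j →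
      ∀ k : ℤ, ¬ Associated z ((σ ^ k) w)) :
    (PQInvariant σ p q (Ideal.span {∏ i, g i}) ↔
        ∀ i, PQInvariant σ p q (Ideal.span {g i})) ∧
      Ideal.span {∏ i, g i} = ⨅ i, Ideal.span {g i} := by
  classical
  -- pairwise relative primality
  have hpair : Pairwise (Function.onFun IsRelPrime g) := by
    intro i j hij
    refine relPrime_of_no_common_irred (hg0 i) ?_
    intro z hz hzi hzj
    exact hdisj i j hij z z hz hzi hz hzj 0 (by exact Associated.refl z)
  -- irreducible factors of g i are relatively prime to σ-twists of products over j ≠ i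
  have key : ∀ (i : Fin m) (k : ℤ),
      IsRelPrime (g i) ((σ ^ k) (∏ j ∈ Finset.univ.erase i, g j)) := by
    intro i k
    refine relPrime_of_no_common_irred (hg0 i) ?_
    intro z hz hzi hzp
    have hz' : Irreducible (((σ ^ k)⁻¹ : R ≃+* R) z) :=
      (MulEquiv.irreducible_iff ((σ ^ k)⁻¹ : R ≃+* R).toMulEquiv).mpr hz
    have cancel : ∀ y : R, ((σ ^ k)⁻¹ : R ≃+* R) ((σ ^ k) y) = y := fun y =>
      (σ ^ k).symm_apply_apply y
    have cancel' : ∀ y : R, (σ ^ k) (((σ ^ k)⁻¹ : R ≃+* R) y) = y := fun y =>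
      (σ ^ k).apply_symm_apply y
    have hdvd : (((σ ^ k)⁻¹ : R ≃+* R) z) ∣ ∏ j ∈ Finset.univ.erase i, g j := by
      obtain ⟨c, hc⟩ := hzp
      refine ⟨((σ ^ k)⁻¹ : R ≃+* R) c, ?_⟩
      have h2 := congrArg ((σ ^ k)⁻¹ : R ≃+* R) hc
      rwa [cancel, map_mul] at h2
    have hprime : Prime (((σ ^ k)⁻¹ : R ≃+* R) z) :=
      (UniqueFactorizationMonoid.irreducible_iff_prime).mp hz'
    obtain ⟨j, hj, hdj⟩ := hprime.exists_mem_finset_dvd hdvd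
    have hji : j ≠ i := (Finset.mem_erase.mp hj).1
    refine hdisj i j (Ne.symm hji) z (((σ ^ k)⁻¹ : R ≃+* R) z) hz hzi hz' hdj k ?_
    rw [cancel']
  -- the intersection statement
  have hspan : Ideal.span {∏ i, g i} = ⨅ i, Ideal.span {g i} := by
    ext x
    simp only [Ideal.mem_span_singleton, Ideal.mem_iInf]
    constructor
    · intro h i
      exact (Finset.dvd_prod_of_mem g (Finset.mem_univ i)).trans h
    · intro h
      exact Fintype.prod_dvd_of_isRelPrime hpair fun i => h i
  refine ⟨⟨?_, ?_⟩, hspan⟩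
  · -- forward: ⟨∏ g⟩ invariant → each ⟨g i⟩ invariant
    intro H i x hx
    rw [Ideal.mem_span_singleton] at hx
    set h := ∏ j ∈ Finset.univ.erase i, g j with hh
    have hprod : ∏ j, g j = g i * h := (Finset.mul_prod_erase _ g (Finset.mem_univ i)).symm
    have hmem : h * x ∈ Ideal.span {∏ j, g j} := by
      rw [Ideal.mem_span_singleton, hprod]
      obtain ⟨y, rfl⟩ := hx
      exact ⟨y, by ring⟩
    obtain ⟨H1, H2⟩ := H _ hmem
    constructor
    · rw [Ideal.mem_span_singleton]
      rw [Ideal.mem_span_singleton, hprod] at H1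
      have hd : g i ∣ σ⁻¹ h * (σ⁻¹ x * p) := by
        refine (dvd_mul_right (g i) h).trans ?_
        have : σ⁻¹ (h * x) * p = σ⁻¹ h * (σ⁻¹ x * p) := by
          rw [map_mul]; ring
        rwa [this] at H1
      have hrel : IsRelPrime (g i) (σ⁻¹ h) := by
        have := key i (-1)
        rwa [zpow_neg_one] at this
      exact hrel.dvd_of_dvd_mul_left hd
    · rw [Ideal.mem_span_singleton]
      rw [Ideal.mem_span_singleton, hprod] at H2
      have hd : g i ∣ σ h * (σ x * q) := by
        refine (dvd_mul_right (g i) h).trans ?_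
        have : σ (h * x) * q = σ h * (σ x * q) := by
          rw [map_mul]; ring
        rwa [this] at H2
      have hrel : IsRelPrime (g i) (σ h) := by
        have := key i 1
        rwa [zpow_one] at this
      exact hrel.dvd_of_dvd_mul_left hd
  · -- backward: each ⟨g i⟩ invariant → ⟨∏ g⟩ invariant
    intro H x hx
    rw [hspan] at hx ⊢
    simp only [Ideal.mem_iInf] at hx ⊢
    exact ⟨fun i => ((H i) x (hx i)).1, fun i => ((H i) x (hx i)).2⟩
end

section
/- Let R be a unique factorization domain with a ring automorphism σ, and let z ∈ R be irreducible such that σ^m(z) and σ^n(z) are not associates whenever m ≠ n. Let p, q ∈ R be nonzero, and for k ∈ ℤ let p̄(k) (respectively q̄(k)) denote the multiplicity of σ^k(z) as an irreducible factor of p (respectively of q), i.e. the largest e ≥ 0 such that σ^k(z)^e divides p (resp. q). Let ḡ : ℤ → ℕ be a finitely supported function and set g = ∏_{k ∈ ℤ} σ^k(z)^{ḡ(k)}. Then the principal ideal ⟨g⟩ is (p,q)-invariant if and only if for every k ∈ ℤ one has ḡ(k) − ḡ(k+1) ≤ p̄(k) and ḡ(k) − ḡ(k−1) ≤ q̄(k)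 (inequalities in ℤ). -/
section Aux

variable {R : Type*} [CommRing R] [IsDomain R] [UniqueFactorizationMonoid R]

lemma aux_relprime {P : ℤ → R} (hP : ∀ k, Prime (P k))
    (hPa : ∀ m n : ℤ, m ≠ n → ¬ Associated (P m) (P n)) {m n : ℤ} (h : m ≠ n) :
    IsRelPrime (P m) (P n) := by
  intro d hdm hdn
  rcases ((hP m).irreducible.dvd_iff).mp hdm with hu | ha
  · exact hu
  · exact absurd ((hP m).associated_of_dvd (hP n) (ha.dvd.trans hdn)) (hPa m n h)

lemma aux_not_dvd_prod {P : ℤ → R} (hP : ∀ k, Prime (P k))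
    (hPa : ∀ m n : ℤ, m ≠ n → ¬ Associated (P m) (P n)) (k : ℤ) {s : Finset ℤ}
    (hk : k ∉ s) (f : ℤ → ℕ) : ¬ P k ∣ ∏ j ∈ s, P j ^ f j := by
  intro hdvd
  obtain ⟨j, hjs, hj⟩ := ((hP k).dvd_finset_prod_iff _).mp hdvd
  have hkj : k ≠ j := fun h => hk (h ▸ hjs)
  exact hPa k j hkj ((hP k).associated_of_dvd (hP j) ((hP k).dvd_of_dvd_pow hj))

/-- Key divisibility criterion: `∏ P k ^ gbar k ∣ x` iff `gbar k ≤ mbar k` for all `k`,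
where `mbar k` is the multiplicity of `P k` in `x`. -/
lemma aux_dvd_iff {P : ℤ → R} (hP : ∀ k, Prime (P k))
    (hPa : ∀ m n : ℤ, m ≠ n → ¬ Associated (P m) (P n))
    (S : Finset ℤ) (gbar mbar : ℤ → ℕ) (hgS : ∀ k ∉ S, gbar k = 0)
    (x : R) (hm : ∀ k, P k ^ mbar k ∣ x ∧ ¬ P k ^ (mbar k + 1) ∣ x) :
    (∏ k ∈ S, P k ^ gbar k) ∣ x ↔ ∀ k, gbar k ≤ mbar k := by
  constructor
  · intro hdvd k
    by_contra hlt
    push_neg at hlt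
    have h1 : P k ^ (mbar k + 1) ∣ P k ^ gbar k := pow_dvd_pow _ hlt
    have h2 : P k ^ gbar k ∣ x := by
      by_cases hkS : k ∈ S
      · exact (Finset.dvd_prod_of_mem _ hkS).trans hdvd
      · simp [hgS k hkS]
    exact (hm k).2 (h1.trans h2)
  · intro hle
    classical
    clear hgS
    induction S using Finset.induction with
    | empty => simpa using one_dvd x
    | @insert a s ha ih =>
      rw [Finset.prod_insert ha]
      exact IsRelPrime.mul_dvd
        (IsRelPrime.prod_right fun j hj =>
          (aux_relprime hP hPa (fun h => ha (by rw [h]; exact hj))).pow)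
        ((pow_dvd_pow _ (hle a)).trans (hm a).1) ih

/-- Multiplicity of `P k` in a product `(∏ P j ^ hbar j) * p`. -/
lemma aux_mult {P : ℤ → R} (hP : ∀ k, Prime (P k))
    (hPa : ∀ m n : ℤ, m ≠ n → ¬ Associated (P m) (P n))
    (T : Finset ℤ) (hbar pbar : ℤ → ℕ) (hhT : ∀ k ∉ T, hbar k = 0)
    (p : R) (hpb : ∀ k, P k ^ pbar k ∣ p ∧ ¬ P k ^ (pbar k + 1) ∣ p) (k : ℤ) :
    P k ^ (hbar k + pbar k) ∣ (∏ j ∈ T, P j ^ hbar j) * p ∧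
      ¬ P k ^ (hbar k + pbar k + 1) ∣ (∏ j ∈ T, P j ^ hbar j) * p := by
  classical
  have hsplit : (∏ j ∈ T, P j ^ hbar j) = P k ^ hbar k * ∏ j ∈ T.erase k, P j ^ hbar j := by
    by_cases hkT : k ∈ T
    · exact (Finset.mul_prod_erase T _ hkT).symm
    · rw [hhT k hkT, pow_zero, one_mul, Finset.erase_eq_of_notMem hkT]
  constructor
  · rw [pow_add]
    exact mul_dvd_mul (hsplit ▸ Dvd.intro _ rfl) (hpb k).1
  · intro hdvd
    rw [hsplit] at hdvd
    have h1 : P k ^ hbar k * P k ^ (pbar k + 1) ∣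
        P k ^ hbar k * ((∏ j ∈ T.erase k, P j ^ hbar j) * p) := by
      rw [← pow_add]
      calc P k ^ (hbar k + (pbar k + 1)) = P k ^ (hbar k + pbar k + 1) := by ring_nf
        _ ∣ _ := by rwa [mul_assoc] at hdvd
    have h2 : P k ^ (pbar k + 1) ∣ (∏ j ∈ T.erase k, P j ^ hbar j) * p :=
      (mul_dvd_mul_iff_left (pow_ne_zero _ (hP k).ne_zero)).mp h1
    have h3 : ¬ P k ∣ ∏ j ∈ T.erase k, P j ^ hbar j :=
      aux_not_dvd_prod hP hPa k (Finset.notMem_erase k T) hbar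
    exact (hpb k).2 ((hP k).pow_dvd_of_dvd_mul_left _ h3 h2)

/-- Combined: `g ∣ h * p ↔ ∀ k, gbar k ≤ hbar k + pbar k`. -/
lemma aux_key {P : ℤ → R} (hP : ∀ k, Prime (P k))
    (hPa : ∀ m n : ℤ, m ≠ n → ¬ Associated (P m) (P n))
    (S T : Finset ℤ) (gbar hbar pbar : ℤ → ℕ)
    (hgS : ∀ k ∉ S, gbar k = 0) (hhT : ∀ k ∉ T, hbar k = 0)
    (p : R) (hpb : ∀ k, P k ^ pbar k ∣ p ∧ ¬ P k ^ (pbar k + 1) ∣ p) :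
    (∏ k ∈ S, P k ^ gbar k) ∣ (∏ j ∈ T, P j ^ hbar j) * p ↔
      ∀ k, gbar k ≤ hbar k + pbar k :=
  aux_dvd_iff hP hPa S gbar (fun k => hbar k + pbar k) hgS _
    (aux_mult hP hPa T hbar pbar hhT p hpb)

lemma pqinv_iff (σ : R ≃+* R) (p q g : R) :
    (∀ i ∈ Ideal.span {g}, σ⁻¹ i * p ∈ Ideal.span {g} ∧ σ i * q ∈ Ideal.span {g}) ↔
      g ∣ σ⁻¹ g * p ∧ g ∣ σ g * q := by
  constructor
  · intro h
    obtain ⟨h1, h2⟩ := h g (Ideal.mem_span_singleton_self g)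
    exact ⟨Ideal.mem_span_singleton.mp h1, Ideal.mem_span_singleton.mp h2⟩
  · rintro ⟨h1, h2⟩ i hi
    obtain ⟨c, hc⟩ := Ideal.mem_span_singleton.mp hi
    subst hc
    constructor
    · rw [Ideal.mem_span_singleton, map_mul]
      calc g ∣ σ⁻¹ g * p := h1
        _ ∣ σ⁻¹ c * (σ⁻¹ g * p) := dvd_mul_left _ _
        _ = σ⁻¹ g * σ⁻¹ c * p := by ring
    · rw [Ideal.mem_span_singleton, map_mul]
      calc g ∣ σ g * q := h2
        _ ∣ σ c * (σ g * q) := dvd_mul_left _ _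
        _ = σ g * σ c * q := by ring

end Aux

/-- Let `z` be an irreducible of a UFD `R` whose `σ`-orbit is infinite
(no two distinct `σ`-powers of `z` are associates), let `p̄(k)`, `q̄(k)` record the
multiplicities of `σ^k(z)` in `p`, `q`, let `ḡ : ℤ → ℕ` be finitely supported and
`g = ∏ₖ σ^k(z)^{ḡ(k)}`. Then `⟨g⟩` is `(p,q)`-invariant iff for all `k` one has
`ḡ(k) − ḡ(k+1) ≤ p̄(k)` and `ḡ(k) − ḡ(k−1) ≤ q̄(k)`. -/
theorem stmt_7 {R : Type*} [CommRing R] [IsDomain R] [UniqueFactorizationMonoid R]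
    (σ : R ≃+* R) (z : R) (hz : Irreducible z)
    (horb : ∀ m n : ℤ, m ≠ n → ¬ Associated ((σ ^ m) z) ((σ ^ n) z))
    (p q : R) (hp : p ≠ 0) (hq : q ≠ 0)
    (pbar qbar : ℤ → ℕ)
    (hpbar : ∀ k : ℤ, ((σ ^ k) z) ^ pbar k ∣ p ∧ ¬ ((σ ^ k) z) ^ (pbar k + 1) ∣ p)
    (hqbar : ∀ k : ℤ, ((σ ^ k) z) ^ qbar k ∣ q ∧ ¬ ((σ ^ k) z) ^ (qbar k + 1) ∣ q)
    (gbar : ℤ → ℕ) (hgbar : {k : ℤ | gbar k ≠ 0}.Finite)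
    (g : R) (hg : g = ∏ᶠ k : ℤ, ((σ ^ k) z) ^ gbar k) :
    PQInvariant σ p q (Ideal.span {g}) ↔
      ∀ k : ℤ, (gbar k : ℤ) - gbar (k + 1) ≤ pbar k ∧
        (gbar k : ℤ) - gbar (k - 1) ≤ qbar k := by
  classical
  set P : ℤ → R := fun k => (σ ^ k) z with hP
  have hPprime : ∀ k, Prime (P k) :=
    fun k => UniqueFactorizationMonoid.irreducible_iff_prime.mp (hz.map (σ ^ k))
  -- the finite support set
  set S : Finset ℤ := hgbar.toFinset with hS
  have hgS : ∀ k ∉ S, gbar k = 0 := by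
    intro k hk
    by_contra h
    exact hk (hgbar.mem_toFinset.mpr h)
  have hgfin : g = ∏ k ∈ S, P k ^ gbar k := by
    rw [hg]
    refine finprod_eq_prod_of_mulSupport_subset _ (fun k hk => ?_)
    simp only [Function.mulSupport, Set.mem_setOf_eq] at hk
    by_contra hkS
    rw [hgS k (by simpa using hkS), pow_zero] at hk
    exact hk rfl
  -- compute σ⁻¹ g and σ g
  have hPeq : ∀ (m j : ℤ), (σ ^ m) (P j) = P (m + j) := by
    intro m j
    rw [hP]
    show (σ ^ m) ((σ ^ j) z) = (σ ^ (m + j)) z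
    rw [zpow_add]
    rfl
  have hinv : σ⁻¹ g = ∏ k ∈ S.image (· - 1), P k ^ gbar (k + 1) := by
    have : σ⁻¹ g = ∏ k ∈ S, P (k - 1) ^ gbar k := by
      rw [hgfin, map_prod]
      refine Finset.prod_congr rfl (fun k _ => ?_)
      rw [map_pow]
      congr 1
      have := hPeq (-1) k
      rw [zpow_neg_one] at this
      rw [this]
      congr 1
      ring
    rw [this, Finset.prod_image (fun a _ b _ h => by omega)]
    refine Finset.prod_congr rfl (fun k _ => by rw [sub_add_cancel])
  have hfwd : σ g = ∏ k ∈ S.image (· + 1), P k ^ gbar (k - 1) := by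
    have : σ g = ∏ k ∈ S, P (k + 1) ^ gbar k := by
      rw [hgfin, map_prod]
      refine Finset.prod_congr rfl (fun k _ => ?_)
      rw [map_pow]
      congr 1
      have := hPeq 1 k
      rw [zpow_one] at this
      rw [this]
      congr 1
      ring
    rw [this, Finset.prod_image (fun a _ b _ h => by omega)]
    refine Finset.prod_congr rfl (fun k _ => by rw [add_sub_cancel_right])
  have hhT1 : ∀ k ∉ S.image (· - 1), gbar (k + 1) = 0 := by
    intro k hk
    refine hgS _ (fun hmem => hk ?_)
    exact Finset.mem_image.mpr ⟨k + 1, hmem, by ring⟩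
  have hhT2 : ∀ k ∉ S.image (· + 1), gbar (k - 1) = 0 := by
    intro k hk
    refine hgS _ (fun hmem => hk ?_)
    exact Finset.mem_image.mpr ⟨k - 1, hmem, by ring⟩
  rw [show PQInvariant σ p q (Ideal.span {g}) ↔
      (∀ i ∈ Ideal.span {g}, σ⁻¹ i * p ∈ Ideal.span {g} ∧ σ i * q ∈ Ideal.span {g})
    from Iff.rfl, pqinv_iff σ p q g]
  rw [hinv, hfwd]
  conv_lhs => rw [hgfin]
  rw [aux_key hPprime horb S _ gbar (fun k => gbar (k + 1)) pbar hgS hhT1 p hpbar,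
    aux_key hPprime horb S _ gbar (fun k => gbar (k - 1)) qbar hgS hhT2 q hqbar]
  constructor
  · rintro ⟨h1, h2⟩ k
    have := h1 k
    have := h2 k
    omega
  · intro h
    refine ⟨fun k => ?_, fun k => ?_⟩ <;> have := h k <;> omega
end

section
/- Let R be a unique factorization domain with a ring automorphism σ and let p, q ∈ R be nonzero. Let q₀ ∈ R be irreducible with q₀ dividing q, let n ≥ 0 be an integer such that σ^n(q₀) divides p, and assume that σ^i(q₀) and σ^j(q₀) are not associates for 0 ≤ i < j ≤ n. Then the principal ideal generated by the chain product ∏_{i=0}^{n} σ^i(q₀) is a (p,q)-invariant ideal of R. -/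
/-- Basic submodules of `V_p` over a UFD: if `q₀` is irreducible with
`q₀ ∣ q`, `σ^n(q₀) ∣ p` for some `n ≥ 0`, and `σ^i(q₀)` (`0 ≤ i ≤ n`) are pairwise
non-associated, then the principal ideal generated by the chain product
`∏_{i=0}^{n} σ^i(q₀)` is `(p,q)`-invariant. -/
theorem stmt_8 {R : Type*} [CommRing R] [IsDomain R] [UniqueFactorizationMonoid R]
    (σ : R ≃+* R) (p q : R) (hp : p ≠ 0) (hq : q ≠ 0)
    (q₀ : R) (hq₀ : Irreducible q₀) (hq₀q : q₀ ∣ q)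
    (n : ℕ) (hp₀ : (σ ^ n) q₀ ∣ p)
    (hdist : ∀ i j : ℕ, i < j → j ≤ n → ¬ Associated ((σ ^ i) q₀) ((σ ^ j) q₀)) :
    PQInvariant σ p q (Ideal.span {∏ i ∈ Finset.range (n + 1), (σ ^ i) q₀}) := by
  classical
  set c := ∏ i ∈ Finset.range (n + 1), (σ ^ i) q₀ with hc
  have hσc : σ c = ∏ i ∈ Finset.range (n + 1), (σ ^ (i + 1)) q₀ := by
    rw [hc, map_prod]
    exact Finset.prod_congr rfl fun i _ => by rw [pow_succ']; rfl
  have key : q₀ * σ c = c * (σ ^ (n + 1)) q₀ := by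
    have h1 := Finset.prod_range_succ' (fun i => (σ ^ i) q₀) (n + 1)
    have h2 := Finset.prod_range_succ (fun i => (σ ^ i) q₀) (n + 1)
    have h0 : ((1 : R ≃+* R)) q₀ = q₀ := rfl
    rw [pow_zero, h0] at h1
    rw [hσc, hc, mul_comm, ← h1, h2]
  have hinvc : σ⁻¹ (σ c) = c := σ.symm_apply_apply c
  have hinvp : σ⁻¹ ((σ ^ (n + 1)) q₀) = (σ ^ n) q₀ := by
    have : (σ ^ (n + 1)) q₀ = σ ((σ ^ n) q₀) := by rw [pow_succ']; rfl
    rw [this]; exact σ.symm_apply_apply _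
  have keyinv : σ⁻¹ q₀ * c = σ⁻¹ c * (σ ^ n) q₀ := by
    have h := congrArg (σ⁻¹ : R ≃+* R) key
    simpa only [map_mul, hinvc, hinvp] using h
  intro i hi
  obtain ⟨r, hr⟩ := Ideal.mem_span_singleton.mp hi
  obtain ⟨s, hs⟩ := hp₀
  obtain ⟨t, ht⟩ := hq₀q
  constructor
  · refine Ideal.mem_span_singleton.mpr ⟨σ⁻¹ q₀ * σ⁻¹ r * s, ?_⟩
    rw [hr, hs, map_mul]
    linear_combination (-(σ⁻¹ r * s)) * keyinv
  · refine Ideal.mem_span_singleton.mpr ⟨(σ ^ (n + 1)) q₀ * σ r * t, ?_⟩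
    rw [hr, ht, map_mul]
    linear_combination (σ r * t) * key
end

section
/- Let R be a principal ideal domain with a ring automorphism σ such that for every irreducible z ∈ R and every m ≥ 1, σ^m(z) is not an associate of z. Let p, q ∈ R be nonzero, let q₀ ∈ R be irreducible with q₀ dividing q, and let n ≥ 0 with σ^n(q₀) dividing p. Assume there are no integers 0 ≤ i ≤ j ≤ n with j − i < n such that σ^i(q₀) divides q and σ^j(q₀) divides p. Then the ideal J generated by ∏_{i=0}^{n} σ^i(q₀) is a maximal (p,q)-invariant ideal: J ≠ R, J is (p,q)-invariant, and every (p,q)-invariant ideal of R strictly containing J equals R. -/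
/-- Maximal basic submodules of `V_p` over a PID with infinite orbits:
under the minimality condition on the pair `(q₀, σ^n(q₀))`, the ideal generated by the
chain product `∏_{i=0}^{n} σ^i(q₀)` is a maximal `(p,q)`-invariant ideal. -/
theorem stmt_9 {R : Type*} [CommRing R] [IsDomain R] [IsPrincipalIdealRing R]
    (σ : R ≃+* R)
    (horb : ∀ z : R, Irreducible z → ∀ m : ℕ, 1 ≤ m → ¬ Associated ((σ ^ m) z) z)
    (p q : R) (hp : p ≠ 0) (hq : q ≠ 0)
    (q₀ : R) (hq₀ : Irreducible q₀) (hq₀q : q₀ ∣ q)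
    (n : ℕ) (hp₀ : (σ ^ n) q₀ ∣ p)
    (hminimal : ¬ ∃ i j : ℕ, i ≤ j ∧ j ≤ n ∧ j - i < n ∧ (σ ^ i) q₀ ∣ q ∧ (σ ^ j) q₀ ∣ p) :
    Ideal.span {∏ i ∈ Finset.range (n + 1), (σ ^ i) q₀} ≠ (⊤ : Ideal R) ∧
      PQInvariant σ p q (Ideal.span {∏ i ∈ Finset.range (n + 1), (σ ^ i) q₀}) ∧
      ∀ I : Ideal R, PQInvariant σ p q I →
        Ideal.span {∏ i ∈ Finset.range (n + 1), (σ ^ i) q₀} < I → I = ⊤ := by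
  set c : R := ∏ i ∈ Finset.range (n + 1), (σ ^ i) q₀ with hc
  -- basic facts
  have hpow : ∀ (k : ℕ) (x : R), (σ ^ (k + 1)) x = σ ((σ ^ k) x) := by
    intro k x; rw [pow_succ']; rfl
  have hpow0 : ∀ x : R, (σ ^ 0) x = x := fun x => rfl
  have hinvpow : ∀ (k : ℕ) (x : R), σ⁻¹ ((σ ^ (k + 1)) x) = (σ ^ k) x := by
    intro k x; rw [hpow]; exact σ.symm_apply_apply _
  have hirr : ∀ i : ℕ, Irreducible ((σ ^ i) q₀) := fun i => hq₀.map (σ ^ i)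
  have hprime : ∀ i : ℕ, Prime ((σ ^ i) q₀) := fun i => (hirr i).prime
  -- non-association of distinct terms of the orbit
  have hnassoc : ∀ i j : ℕ, i < j → ¬ Associated ((σ ^ j) q₀) ((σ ^ i) q₀) := by
    intro i j hij h
    obtain ⟨m, rfl⟩ : ∃ m, j = i + m := ⟨j - i, by omega⟩
    have h2 : Associated (((σ ^ i)⁻¹ : R ≃+* R) ((σ ^ (i + m)) q₀))
        (((σ ^ i)⁻¹ : R ≃+* R) ((σ ^ i) q₀)) := h.map ((σ ^ i)⁻¹ : R ≃+* R)
    have e1 : ((σ ^ i)⁻¹ : R ≃+* R) ((σ ^ (i + m)) q₀) = (σ ^ m) q₀ := by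
      rw [pow_add]
      exact (σ ^ i).symm_apply_apply _
    have e2 : ((σ ^ i)⁻¹ : R ≃+* R) ((σ ^ i) q₀) = q₀ := (σ ^ i).symm_apply_apply _
    rw [e1, e2] at h2
    exact horb q₀ hq₀ m (by omega) h2
  have heq_of_dvd : ∀ i j : ℕ, (σ ^ i) q₀ ∣ (σ ^ j) q₀ → i = j := by
    intro i j h
    by_contra hne
    have hA : Associated ((σ ^ i) q₀) ((σ ^ j) q₀) :=
      (hirr i).associated_of_dvd (hirr j) h
    rcases Nat.lt_or_ge i j with hlt | hge
    · exact hnassoc i j hlt hA.symm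
    · exact hnassoc j i (by omega) hA
  have hc0 : c ≠ 0 := by
    rw [hc]
    exact Finset.prod_ne_zero_iff.mpr fun i _ => (hirr i).ne_zero
  have hcunit : ¬ IsUnit c := by
    intro hu
    have hdvd : q₀ ∣ c := by
      have h0 : (0 : ℕ) ∈ Finset.range (n + 1) := by simp
      have := Finset.dvd_prod_of_mem (fun i => (σ ^ i) q₀) h0
      exact this
    exact hq₀.not_isUnit (isUnit_of_dvd_unit hdvd hu)
  refine ⟨?_, ?_, ?_⟩
  · -- J ≠ ⊤
    intro h
    exact hcunit (Ideal.span_singleton_eq_top.mp h)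
  · -- invariance
    intro x hx
    rw [Ideal.mem_span_singleton] at hx
    obtain ⟨r, rfl⟩ := hx
    obtain ⟨p', hp'⟩ := hp₀
    obtain ⟨q', hq'⟩ := hq₀q
    constructor
    · rw [Ideal.mem_span_singleton, map_mul]
      have key : c ∣ σ⁻¹ c * p := by
        have e1 : σ⁻¹ c = (∏ i ∈ Finset.range n, (σ ^ i) q₀) * σ⁻¹ q₀ := by
          rw [hc, map_prod σ⁻¹ (fun i => (σ ^ i) q₀) (Finset.range (n + 1)),
            Finset.prod_range_succ' (fun k => σ⁻¹ ((σ ^ k) q₀)) n,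
            Finset.prod_congr rfl (fun k _ => hinvpow k q₀), hpow0]
        refine ⟨σ⁻¹ q₀ * p', ?_⟩
        rw [e1, hp', hc, Finset.prod_range_succ]
        ring
      obtain ⟨w, hw⟩ := key
      exact ⟨w * σ⁻¹ r, by
        rw [show σ⁻¹ c * σ⁻¹ r * p = σ⁻¹ c * p * σ⁻¹ r by ring, hw]; ring⟩
    · rw [Ideal.mem_span_singleton, map_mul]
      have key : c ∣ σ c * q := by
        have e1 : σ c = (∏ i ∈ Finset.range n, (σ ^ (i + 1)) q₀) * (σ ^ (n + 1)) q₀ := by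
          rw [hc, map_prod σ (fun i => (σ ^ i) q₀) (Finset.range (n + 1)),
            ← Finset.prod_congr rfl fun k (_ : k ∈ Finset.range (n + 1)) => (hpow k q₀),
            Finset.prod_range_succ]
        have e2 : c = (∏ i ∈ Finset.range n, (σ ^ (i + 1)) q₀) * q₀ := by
          rw [hc, Finset.prod_range_succ' (fun k => (σ ^ k) q₀) n, hpow0]
        refine ⟨(σ ^ (n + 1)) q₀ * q', ?_⟩
        rw [e1, hq', e2]
        ring
      obtain ⟨w, hw⟩ := key
      exact ⟨w * σ r, by rw [mul_comm (σ c) (σ r), mul_assoc, hw]; ring⟩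
  · -- maximality
    intro I hI hlt
    obtain ⟨d, rfl⟩ := (IsPrincipalIdealRing.principal I).principal
    rw [Ideal.submodule_span_eq] at hlt hI ⊢
    have hdc : d ∣ c := Ideal.span_singleton_le_span_singleton.mp hlt.le
    have hncd : ¬ c ∣ d := fun h =>
      hlt.not_ge (Ideal.span_singleton_le_span_singleton.mpr h)
    by_contra hne
    have hdunit : ¬ IsUnit d := fun h => hne (Ideal.span_singleton_eq_top.mpr h)
    have hd0 : d ≠ 0 := fun h => hc0 (by rwa [h, zero_dvd_iff] at hdc)
    -- invariance of (d) as divisibilities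
    obtain ⟨hd1, hd2⟩ := hI d (Ideal.mem_span_singleton_self d)
    rw [Ideal.mem_span_singleton] at hd1 hd2
    -- membership function
    set S : ℕ → Prop := fun i => (σ ^ i) q₀ ∣ d with hS
    have hbound : ∀ i, S i → i ≤ n := by
      intro i hi
      obtain ⟨j, hj, hdvd⟩ := (hprime i).exists_mem_finset_dvd (hi.trans hdc)
      have := heq_of_dvd i j hdvd
      simp only [Finset.mem_range] at hj
      omega
    have step_up : ∀ i, S i → S (i + 1) ∨ (σ ^ i) q₀ ∣ p := by
      intro i hi
      rcases (hprime i).dvd_or_dvd (hi.trans hd1) with h | h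
      · left
        have e : σ (σ⁻¹ d) = d := σ.apply_symm_apply d
        have h2 := map_dvd σ h
        rw [← hpow, e] at h2
        exact h2
      · right; exact h
    have step_down : ∀ i, S (i + 1) → S i ∨ (σ ^ (i + 1)) q₀ ∣ q := by
      intro i hi
      rcases (hprime (i + 1)).dvd_or_dvd (hi.trans hd2) with h | h
      · left
        have e : σ⁻¹ (σ d) = d := σ.symm_apply_apply d
        have h2 := map_dvd (σ⁻¹ : R ≃+* R) h
        rw [hinvpow, e] at h2
        exact h2
      · right; exact h
    -- climb down to a divisor of q
    have down : ∀ a, S a → ∃ i, S i ∧ i ≤ a ∧ (σ ^ i) q₀ ∣ q := by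
      intro a
      induction a with
      | zero => intro h; exact ⟨0, h, le_refl 0, by rw [hpow0]; exact hq₀q⟩
      | succ a ih =>
        intro h
        rcases step_down a h with h' | h'
        · obtain ⟨i, hi, hle, hdq⟩ := ih h'
          exact ⟨i, hi, by omega, hdq⟩
        · exact ⟨a + 1, h, le_refl _, h'⟩
    -- climb up to a divisor of p, keeping track of the interval
    have up : ∀ k i, S i → n - i ≤ k →
        ∃ j, i ≤ j ∧ S j ∧ (σ ^ j) q₀ ∣ p ∧ ∀ m, i ≤ m → m ≤ j → S m := by
      intro k
      induction k with
      | zero =>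
        intro i hi hki
        have hin : i = n := by have := hbound i hi; omega
        subst hin
        exact ⟨i, le_refl i, hi, hp₀, fun m h1 h2 => by
          have : m = i := le_antisymm h2 h1; rwa [this]⟩
      | succ k ih =>
        intro i hi hki
        rcases step_up i hi with h' | h'
        · have hi1 : i + 1 ≤ n := hbound _ h'
          obtain ⟨j, hij, hjS, hjp, hint⟩ := ih (i + 1) h' (by omega)
          refine ⟨j, by omega, hjS, hjp, fun m h1 h2 => ?_⟩
          rcases Nat.eq_or_lt_of_le h1 with rfl | h1'
          · exact hi
          · exact hint m (by omega) h2
        · exact ⟨i, le_refl i, hi, h', fun m h1 h2 => by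
            have : m = i := le_antisymm h2 h1; rwa [this]⟩
    -- start: some σ^a q₀ divides d
    obtain ⟨z, hz, hzd⟩ := WfDvdMonoid.exists_irreducible_factor hdunit hd0
    obtain ⟨a, ha, hza⟩ := hz.prime.exists_mem_finset_dvd (hzd.trans hdc)
    have haS : S a := ((hz.associated_of_dvd (hirr a) hza).symm.dvd).trans hzd
    obtain ⟨i₀, hi₀S, hi₀a, hi₀q⟩ := down a haS
    obtain ⟨j, hij, hjS, hjp, hint⟩ := up (n - i₀) i₀ hi₀S (le_refl _)
    have hjn : j ≤ n := hbound j hjS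
    rcases Nat.lt_or_ge (j - i₀) n with hlt' | hge'
    · exact hminimal ⟨i₀, j, hij, hjn, hlt', hi₀q, hjp⟩
    · -- then i₀ = 0, j = n, so all of {0..n} divides d, hence c ∣ d
      have hi₀0 : i₀ = 0 := by omega
      have hjn' : j = n := by omega
      have hall : ∀ m, m ≤ n → S m := by
        intro m hm
        exact hint m (by omega) (by omega)
      have hprod : ∀ k, k ≤ n + 1 → (∏ i ∈ Finset.range k, (σ ^ i) q₀) ∣ d := by
        intro k
        induction k with
        | zero => intro _; simp
        | succ k ih =>
          intro hk
          rw [Finset.prod_range_succ]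
          have hcop : IsCoprime ((σ ^ k) q₀) (∏ i ∈ Finset.range k, (σ ^ i) q₀) := by
            rw [(hirr k).coprime_iff_not_dvd]
            intro hdvd
            obtain ⟨j', hj', hdvd'⟩ := (hprime k).exists_mem_finset_dvd hdvd
            have := heq_of_dvd k j' hdvd'
            simp only [Finset.mem_range] at hj'
            omega
          exact hcop.symm.mul_dvd (ih (by omega)) (hall k (by omega))
      exact hncd (hprod (n + 1) (le_refl _))
end
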